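/- arXiv:1812.05147 — 12 statements merged into one kernel-verified Lean document; each statement's English description precedes it below -/
import Mathlib

section
/- If A is an orthogonal array OA_λ(k,n) of strength 2 (a λn² × k array over an n-set such that every ordered pair of symbols occurs exactly λ times in any two columns), with k ≥ 2, n ≥ 2, λ ≥ 1, and A contains a row repeated m times, then m ≤ λn²/(k(n-1)+1). -/
/-- An orthogonal array `OA_λ(k,n)` of strength 2: a `λ n² × k` array over `Fin n`
such that within any two distinct columns every ordered pair of symbols occurs
in exactly `λ` rows. -/
def IsOA (lam k n : ℕ) (A : Fin (lam * n ^ 2) → Fin k → Fin n) : Prop :=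
  ∀ c₁ c₂ : Fin k, c₁ ≠ c₂ → ∀ x y : Fin n,
    (Finset.univ.filter (fun i => A i c₁ = x ∧ A i c₂ = y)).card = lam

theorem stmt0 (k n lam m : ℕ) (hk : 2 ≤ k) (hn : 2 ≤ n) (hlam : 1 ≤ lam)
    (A : Fin (lam * n ^ 2) → Fin k → Fin n) (hA : IsOA lam k n A)
    (r : Fin k → Fin n)
    (hm : (Finset.univ.filter (fun i => A i = r)).card = m) :
    m * (k * (n - 1) + 1) ≤ lam * n ^ 2 := by
  classical
  have hknt : Nontrivial (Fin k) := by
    rw [Fin.nontrivial_iff_two_le]; exact hk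
  have hlamn : lam ≤ lam * n := Nat.le_mul_of_pos_right _ (by omega)
  -- column frequency: each symbol appears lam*n times in each column
  have hcol : ∀ (c : Fin k) (x : Fin n),
      (Finset.univ.filter (fun i => A i c = x)).card = lam * n := by
    intro c x
    obtain ⟨c₂, hc₂⟩ := exists_ne c
    rw [Finset.card_eq_sum_card_fiberwise
      (f := fun i => A i c₂) (t := Finset.univ) (fun i _ => Finset.mem_univ _)]
    simp only [Finset.filter_filter]
    rw [Finset.sum_congr rfl (fun y _ => hA c c₂ (fun h => hc₂ h.symm) x y)]
    simp [mul_comm]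
  -- agreement count
  set a : Fin (lam * n ^ 2) → ℕ :=
    fun i => (Finset.univ.filter (fun c => A i c = r c)).card with ha
  have haeq : ∀ i, a i = ∑ c : Fin k, if A i c = r c then 1 else 0 := by
    intro i
    simp only [ha]
    exact Finset.card_filter _ _
  -- first moment
  have hS1 : ∑ i, a i = k * (lam * n) := by
    rw [Finset.sum_congr rfl (fun i _ => haeq i), Finset.sum_comm]
    have : ∀ c : Fin k, (∑ i, if A i c = r c then 1 else 0) = lam * n := by
      intro c; rw [← Finset.card_filter]; exact hcol c (r c)
    rw [Finset.sum_congr rfl (fun c _ => this c)]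
    simp [mul_comm]
  -- pair counts
  have hpair : ∀ c₁ c₂ : Fin k,
      (Finset.univ.filter (fun i => A i c₁ = r c₁ ∧ A i c₂ = r c₂)).card
      = if c₁ = c₂ then lam * n else lam := by
    intro c₁ c₂
    split_ifs with h
    · subst h
      rw [← hcol c₁ (r c₁)]
      congr 1
      ext i
      simp [and_self]
    · exact hA c₁ c₂ h _ _
  -- second moment
  have hS2 : ∑ i, (a i) ^ 2 = k * (k * lam + (lam * n - lam)) := by
    have expand : ∀ i, (a i) ^ 2
        = ∑ c₁ : Fin k, ∑ c₂ : Fin k,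
            if A i c₁ = r c₁ ∧ A i c₂ = r c₂ then 1 else 0 := by
      intro i
      rw [sq, haeq i, Finset.sum_mul_sum]
      refine Finset.sum_congr rfl fun c₁ _ => Finset.sum_congr rfl fun c₂ _ => ?_
      by_cases h1 : A i c₁ = r c₁ <;> by_cases h2 : A i c₂ = r c₂ <;> simp [h1, h2]
    rw [Finset.sum_congr rfl (fun i _ => expand i), Finset.sum_comm]
    have step : ∀ c₁ : Fin k,
        (∑ i, ∑ c₂ : Fin k, if A i c₁ = r c₁ ∧ A i c₂ = r c₂ then 1 else 0)
        = k * lam + (lam * n - lam) := by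
      intro c₁
      rw [Finset.sum_comm]
      have e1 : ∀ c₂ : Fin k,
          (∑ i, if A i c₁ = r c₁ ∧ A i c₂ = r c₂ then 1 else 0)
          = if c₁ = c₂ then lam * n else lam := by
        intro c₂; rw [← Finset.card_filter]; exact hpair c₁ c₂
      rw [Finset.sum_congr rfl (fun c₂ _ => e1 c₂)]
      have e2 : ∀ c₂ : Fin k, (if c₁ = c₂ then lam * n else lam)
          = lam + (if c₁ = c₂ then lam * n - lam else 0) := by
        intro c₂; split_ifs <;> omega
      rw [Finset.sum_congr rfl (fun c₂ _ => e2 c₂), Finset.sum_add_distrib,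
        Finset.sum_ite_eq Finset.univ c₁ (fun _ => lam * n - lam)]
      simp only [Finset.sum_const, Finset.card_univ, Fintype.card_fin,
        smul_eq_mul, Finset.mem_univ, if_true, mul_one]
    rw [Finset.sum_congr rfl (fun c₁ _ => step c₁)]
    simp only [Finset.sum_const, Finset.card_univ, Fintype.card_fin, smul_eq_mul]
  -- cast to integers
  have hS1' : ∑ i, (a i : ℤ) = (k : ℤ) * (lam * n) := by
    have := congrArg (Nat.cast : ℕ → ℤ) hS1
    push_cast at this
    exact this
  have hS2' : ∑ i, (a i : ℤ) ^ 2 = (k : ℤ) * ((k : ℤ) * lam + (lam * n - lam)) := by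
    have := congrArg (Nat.cast : ℕ → ℤ) hS2
    push_cast [hlamn] at this
    exact this
  set D : ℤ := (k : ℤ) * ((n : ℤ) - 1) + 1 with hD
  have hDpos : 0 < D := by
    have hk' : (2 : ℤ) ≤ (k : ℤ) := by exact_mod_cast hk
    have hn' : (2 : ℤ) ≤ (n : ℤ) := by exact_mod_cast hn
    nlinarith
  -- total sum of squares
  have hsq : ∑ i, ((n : ℤ) * a i - ((k : ℤ) - 1)) ^ 2 = (lam : ℤ) * n ^ 2 * D := by
    have expand : ∀ i : Fin (lam * n ^ 2), ((n : ℤ) * a i - ((k : ℤ) - 1)) ^ 2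
        = (n : ℤ) ^ 2 * (a i : ℤ) ^ 2 - 2 * n * ((k : ℤ) - 1) * (a i : ℤ)
          + ((k : ℤ) - 1) ^ 2 := by
      intro i; ring
    rw [Finset.sum_congr rfl (fun i _ => expand i), Finset.sum_add_distrib,
      Finset.sum_sub_distrib, ← Finset.mul_sum, ← Finset.mul_sum, hS1', hS2',
      Finset.sum_const, Finset.card_univ, Fintype.card_fin]
    have hn1 : (1 : ℕ) ≤ n := by omega
    push_cast [hn1, hlamn, nsmul_eq_mul]
    rw [hD]; ring
  -- rows equal to r contribute D^2 each
  have hsub : ∀ i ∈ Finset.univ.filter (fun i => A i = r),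
      ((n : ℤ) * a i - ((k : ℤ) - 1)) ^ 2 = D ^ 2 := by
    intro i hi
    simp only [Finset.mem_filter] at hi
    have hai : a i = k := by
      simp only [ha, hi.2]
      simp
    rw [hai, hD]
    ring
  have hle : (m : ℤ) * D ^ 2 ≤ (lam : ℤ) * n ^ 2 * D := by
    calc (m : ℤ) * D ^ 2
        = ∑ i ∈ Finset.univ.filter (fun i => A i = r),
            ((n : ℤ) * a i - ((k : ℤ) - 1)) ^ 2 := by
          rw [Finset.sum_congr rfl hsub, Finset.sum_const, hm, nsmul_eq_mul]
      _ ≤ ∑ i, ((n : ℤ) * a i - ((k : ℤ) - 1)) ^ 2 :=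
          Finset.sum_le_sum_of_subset_of_nonneg (Finset.filter_subset _ _)
            (fun i _ _ => sq_nonneg _)
      _ = (lam : ℤ) * n ^ 2 * D := hsq
  have hfin : (m : ℤ) * D ≤ (lam : ℤ) * n ^ 2 :=
    le_of_mul_le_mul_right (by rw [mul_assoc, ← sq]; exact hle) hDpos
  have hn1 : (1 : ℕ) ≤ n := by omega
  zify [hn1]
  calc (m : ℤ) * ((k : ℤ) * ((n : ℤ) - 1) + 1) = (m : ℤ) * D := by rw [hD]
    _ ≤ (lam : ℤ) * n ^ 2 := hfin
end

section
/- Let A be an OA_λ(k,n) containing a row 0 0 ⋯ 0 repeated exactly m = λn²/(k(n-1)+1) times (i.e., A is optimal). Then every row of A other than these m rows contains exactly k(λn − m)/(λn² − m) occurrences of the symbol 0. -/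
theorem stmt1 (k n lam m : ℕ) [NeZero n] (hk : 2 ≤ k) (hn : 2 ≤ n) (hlam : 1 ≤ lam)
    (hopt : m * (k * (n - 1) + 1) = lam * n ^ 2)
    (A : Fin (lam * n ^ 2) → Fin k → Fin n) (hA : IsOA lam k n A)
    (hrep : (Finset.univ.filter (fun i => A i = fun _ => (0 : Fin n))).card = m) :
    ∀ i, A i ≠ (fun _ => (0 : Fin n)) →
      (Finset.univ.filter (fun c => A i c = 0)).card * (lam * n ^ 2 - m)
        = k * (lam * n - m) := by
  intro i hi
  classical
  set z : Fin (lam * n ^ 2) → ℕ := fun j => (Finset.univ.filter (fun c => A j c = 0)).card with hz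
  set R : Finset (Fin (lam * n ^ 2)) := Finset.univ.filter (fun j => A j = fun _ => (0 : Fin n)) with hRdef
  -- column count
  have hcol : ∀ c : Fin k, (Finset.univ.filter (fun j => A j c = 0)).card = lam * n := by
    intro c
    set a : Fin k := ⟨0, by omega⟩ with ha
    set b : Fin k := ⟨1, by omega⟩ with hb
    set c' : Fin k := if c = a then b else a with hc'
    have hne : c ≠ c' := by
      rw [hc']
      split_ifs with h
      · subst h; intro hh; rw [Fin.ext_iff] at hh; simp [ha, hb] at hh
      · exact h
    rw [Finset.card_eq_sum_card_fiberwise (f := fun j => A j c') (t := Finset.univ)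
      (fun x _ => Finset.mem_univ _)]
    have hfib : ∀ y : Fin n,
        ((Finset.univ.filter (fun j => A j c = 0)).filter (fun j => A j c' = y)).card = lam := by
      intro y
      rw [Finset.filter_filter]
      exact hA c c' hne 0 y
    simp [hfib, mul_comm]
  -- total sum of zeros
  have hsum : ∑ j, z j = k * (lam * n) := by
    have h1 : ∀ j, z j = ∑ c : Fin k, if A j c = 0 then 1 else 0 := by
      intro j; rw [hz]; exact Finset.card_filter _ _
    calc ∑ j, z j = ∑ j, ∑ c : Fin k, if A j c = 0 then 1 else 0 := by
          exact Finset.sum_congr rfl fun j _ => h1 j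
      _ = ∑ c : Fin k, ∑ j, if A j c = 0 then 1 else 0 := Finset.sum_comm
      _ = ∑ c : Fin k, (lam * n) := by
          refine Finset.sum_congr rfl fun c _ => ?_
          rw [← Finset.card_filter]; exact hcol c
      _ = k * (lam * n) := by simp [mul_comm]
  -- sum of squares
  have hsum2 : ∑ j, z j ^ 2 = k * ((k - 1) * lam + lam * n) := by
    have h2 : ∀ j, z j ^ 2 = ∑ c₁ : Fin k, ∑ c₂ : Fin k,
        if A j c₁ = 0 ∧ A j c₂ = 0 then 1 else 0 := by
      intro j
      rw [sq, hz]
      beta_reduce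
      rw [Finset.card_filter, Finset.sum_mul_sum]
      refine Finset.sum_congr rfl fun c₁ _ => Finset.sum_congr rfl fun c₂ _ => ?_
      by_cases h1 : A j c₁ = 0 <;> by_cases h2 : A j c₂ = 0 <;> simp [h1, h2]
    calc ∑ j, z j ^ 2
        = ∑ j, ∑ c₁ : Fin k, ∑ c₂ : Fin k, if A j c₁ = 0 ∧ A j c₂ = 0 then 1 else 0 :=
          Finset.sum_congr rfl fun j _ => h2 j
      _ = ∑ c₁ : Fin k, ∑ j, ∑ c₂ : Fin k, if A j c₁ = 0 ∧ A j c₂ = 0 then 1 else 0 :=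
          Finset.sum_comm
      _ = ∑ c₁ : Fin k, ∑ c₂ : Fin k, ∑ j, if A j c₁ = 0 ∧ A j c₂ = 0 then 1 else 0 :=
          Finset.sum_congr rfl fun c₁ _ => Finset.sum_comm
      _ = ∑ c₁ : Fin k, ∑ c₂ : Fin k,
            (Finset.univ.filter (fun j => A j c₁ = 0 ∧ A j c₂ = 0)).card := by
          refine Finset.sum_congr rfl fun c₁ _ => Finset.sum_congr rfl fun c₂ _ => ?_
          rw [← Finset.card_filter]
      _ = ∑ c₁ : Fin k, ((k - 1) * lam + lam * n) := by
          refine Finset.sum_congr rfl fun c₁ _ => ?_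
          rw [← Finset.sum_erase_add _ _ (Finset.mem_univ c₁)]
          have hdiag : (Finset.univ.filter (fun j => A j c₁ = 0 ∧ A j c₁ = 0)).card = lam * n := by
            simp only [and_self]; exact hcol c₁
          have hoff : ∀ c₂ ∈ Finset.univ.erase c₁,
              (Finset.univ.filter (fun j => A j c₁ = 0 ∧ A j c₂ = 0)).card = lam := by
            intro c₂ hc₂
            exact hA c₁ c₂ (Finset.ne_of_mem_erase hc₂).symm 0 0
          rw [Finset.sum_congr rfl hoff, hdiag, Finset.sum_const,
            Finset.card_erase_of_mem (Finset.mem_univ c₁), Finset.card_univ, Fintype.card_fin,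
            smul_eq_mul]
      _ = k * ((k - 1) * lam + lam * n) := by simp [mul_comm]
  -- repeated rows
  have hzR : ∀ j ∈ R, z j = k := by
    intro j hj
    rw [hRdef, Finset.mem_filter] at hj
    have : (Finset.univ.filter (fun c => A j c = 0)) = Finset.univ := by
      refine Finset.filter_true_of_mem fun c _ => ?_
      rw [hj.2]
    rw [hz]; simp only []
    rw [this, Finset.card_univ, Fintype.card_fin]
  have hRcard : R.card = m := hrep
  have hsumR : ∑ j ∈ R, z j = m * k := by
    rw [Finset.sum_congr rfl hzR, Finset.sum_const, hRcard, smul_eq_mul]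
  have hsum2R : ∑ j ∈ R, z j ^ 2 = m * k ^ 2 := by
    have : ∀ j ∈ R, z j ^ 2 = k ^ 2 := fun j hj => by rw [hzR j hj]
    rw [Finset.sum_congr rfl this, Finset.sum_const, hRcard, smul_eq_mul]
  -- split sums
  have hsplit1 : ∑ j ∈ Rᶜ, z j + m * k = k * (lam * n) := by
    rw [← hsumR, add_comm, Finset.sum_add_sum_compl, hsum]
  have hsplit2 : ∑ j ∈ Rᶜ, z j ^ 2 + m * k ^ 2 = k * ((k - 1) * lam + lam * n) := by
    rw [← hsum2R, add_comm, Finset.sum_add_sum_compl, hsum2]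
  have hm2 : m ≤ lam * n ^ 2 := by
    rw [← hrep]
    exact (Finset.card_filter_le _ _).trans_eq (by simp)
  have hTcard : Rᶜ.card = lam * n ^ 2 - m := by
    rw [Finset.card_compl, hRcard]; simp
  -- move to ℤ
  have h1n : (1 : ℕ) ≤ n := by omega
  zify [h1n] at hopt
  have h1k : (1 : ℕ) ≤ k := by omega
  set K : ℤ := (k : ℤ) with hKd
  set L : ℤ := (lam : ℤ) with hLd
  set Nv : ℤ := (n : ℤ) with hNd
  set M : ℤ := (m : ℤ) with hMd
  set S : ℤ := L * Nv ^ 2 - M with hSdef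
  set B : ℤ := K * (L * Nv - M) with hBdef
  have hS0 : 0 ≤ S := by
    rw [hSdef]
    have : (m : ℤ) ≤ (lam * n ^ 2 : ℕ) := by exact_mod_cast hm2
    push_cast at this
    linarith
  have hQ : ∑ j ∈ Rᶜ, (z j : ℤ) ^ 2 = K * ((K - 1) * L + L * Nv) - M * K ^ 2 := by
    have := hsplit2
    zify [h1k] at this
    push_cast at this ⊢
    linarith
  have hB' : ∑ j ∈ Rᶜ, (z j : ℤ) = K * (L * Nv) - M * K := by
    have := hsplit1
    zify at this
    push_cast at this ⊢
    linarith
  have hTcardZ : (Rᶜ.card : ℤ) = S := by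
    rw [hTcard]
    zify [hm2]
    rfl
  have hSQ : S * (K * ((K - 1) * L + L * Nv) - M * K ^ 2) = B ^ 2 := by
    rw [hSdef, hBdef]
    linear_combination (-(K * L * (Nv - 1))) * hopt
  have hzero : ∑ j ∈ Rᶜ, (S * (z j : ℤ) - B) ^ 2 = 0 := by
    have hexp : ∀ j, (S * (z j : ℤ) - B) ^ 2
        = S ^ 2 * (z j : ℤ) ^ 2 - 2 * S * B * (z j : ℤ) + B ^ 2 := fun j => by ring
    rw [Finset.sum_congr rfl fun j _ => hexp j]
    rw [Finset.sum_add_distrib, Finset.sum_sub_distrib, ← Finset.mul_sum, ← Finset.mul_sum,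
      Finset.sum_const, nsmul_eq_mul, hQ, hB', hTcardZ]
    have hBB : K * (L * Nv) - M * K = L * Nv * K - M * K := by ring
    linear_combination S * hSQ + (2 * S * B - S * B - B ^ 2) * (by rw [hBdef]; ring : B = K * (L * Nv) - M * K)
  have hiT : i ∈ Rᶜ := by
    rw [Finset.mem_compl, hRdef, Finset.mem_filter]
    tauto
  have hkey : S * (z i : ℤ) - B = 0 := by
    have h := (Finset.sum_eq_zero_iff_of_nonneg (fun j _ => sq_nonneg _)).mp hzero i hiT
    exact pow_eq_zero_iff (by norm_num) |>.mp h
  have hkey' : (z i : ℤ) * S = B := by linarith [hkey]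
  have hm1 : m ≤ lam * n := by
    have hB0 : 0 ≤ B := by
      rw [← hkey']
      exact mul_nonneg (by positivity) hS0
    rw [hBdef] at hB0
    have hK0 : (0 : ℤ) < K := by rw [hKd]; exact_mod_cast (by omega : 0 < k)
    have hLN : 0 ≤ L * Nv - M := by
      have h0 : K * 0 ≤ K * (L * Nv - M) := by simpa using hB0
      exact le_of_mul_le_mul_left h0 hK0
    rw [hLd, hNd, hMd] at hLN
    have : (m : ℤ) ≤ (lam : ℤ) * (n : ℤ) := by linarith
    exact_mod_cast this
  rw [hSdef, hBdef, hKd, hLd, hNd, hMd] at hkey'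
  have hzi : ((Finset.univ.filter (fun c => A i c = 0)).card : ℤ) = (z i : ℤ) := rfl
  zify [hm1, hm2]
  rw [hzi]
  push_cast at hkey' ⊢
  linarith [hkey']
end

section
/- If m = λn²/(k(n-1)+1) (with k ≥ 2, n ≥ 2, λ ≥ 1 positive integers), then the quantity k(λn − m)/(λn² − m) equals (k−1)/n. Consequently, if an optimal OA_λ(k,n) exists then n divides k−1. -/
theorem stmt2 (k n lam m : ℕ) [NeZero n] (hk : 2 ≤ k) (hn : 2 ≤ n)
    (hlam : 1 ≤ lam) (hm : 1 ≤ m)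
    (heq : m * (k * (n - 1) + 1) = lam * n ^ 2) :
    (k : ℚ) * ((lam : ℚ) * n - m) / ((lam : ℚ) * n ^ 2 - m) = ((k : ℚ) - 1) / n ∧
    ((∃ A : Fin (lam * n ^ 2) → Fin k → Fin n, IsOA lam k n A ∧
        (Finset.univ.filter (fun i => A i = fun _ => (0 : Fin n))).card = m) →
      n ∣ k - 1) := by
  classical
  have hn1 : (1 : ℕ) ≤ n := by omega
  have hk1 : (1 : ℕ) ≤ k := by omega
  -- the key equation over ℚ
  have heqQ : (m : ℚ) * ((k : ℚ) * ((n : ℚ) - 1) + 1) = (lam : ℚ) * (n : ℚ) ^ 2 := by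
    have := congrArg (Nat.cast : ℕ → ℚ) heq
    push_cast [Nat.cast_sub hn1] at this
    linarith
  -- the key equation over ℤ
  have heqZ : (m : ℤ) * ((k : ℤ) * ((n : ℤ) - 1) + 1) = (lam : ℤ) * (n : ℤ) ^ 2 := by
    have := congrArg (Nat.cast : ℕ → ℤ) heq
    push_cast [Nat.cast_sub hn1] at this
    linarith
  constructor
  · -- the rational identity
    have h1 : (1 : ℚ) ≤ m := by exact_mod_cast hm
    have h2 : (2 : ℚ) ≤ k := by exact_mod_cast hk
    have h3 : (2 : ℚ) ≤ n := by exact_mod_cast hn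
    have h4 : (1 : ℚ) ≤ lam := by exact_mod_cast hlam
    have hden' : (lam : ℚ) * (n : ℚ) ^ 2 - m = m * k * ((n : ℚ) - 1) := by
      linear_combination -heqQ
    have hdenpos : (0 : ℚ) < (lam : ℚ) * (n : ℚ) ^ 2 - m := by
      rw [hden']
      have := mul_pos (mul_pos (by linarith : (0:ℚ) < m) (by linarith : (0:ℚ) < k))
        (by linarith : (0:ℚ) < (n:ℚ) - 1)
      linarith
    have hden : (lam : ℚ) * (n : ℚ) ^ 2 - m ≠ 0 := ne_of_gt hdenpos
    have hnQ : (n : ℚ) ≠ 0 := by positivity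
    rw [div_eq_div_iff hden (by positivity : (n:ℚ) ≠ 0)]
    linear_combination -heqQ
  · rintro ⟨A, hA, hcard⟩
    -- number of zeros in row i
    set x : Fin (lam * n ^ 2) → ℕ := fun i => (Finset.univ.filter (fun c => A i c = 0)).card with hxdef
    have hnontriv : Nontrivial (Fin k) := Fin.nontrivial_iff_two_le.mpr hk
    -- each column contains the symbol 0 exactly lam * n times
    have hcol : ∀ c : Fin k,
        (Finset.univ.filter (fun i => A i c = (0 : Fin n))).card = lam * n := by
      intro c
      obtain ⟨c', hc'⟩ := exists_ne c
      have hfib := Finset.card_eq_sum_card_fiberwise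
        (s := Finset.univ.filter (fun i => A i c = (0 : Fin n)))
        (t := (Finset.univ : Finset (Fin n))) (f := fun i => A i c')
        (fun y _ => Finset.mem_univ _)
      rw [hfib]
      have hval : ∀ y : Fin n,
          ((Finset.univ.filter (fun i => A i c = (0 : Fin n))).filter
            (fun i => A i c' = y)).card = lam := by
        intro y
        rw [Finset.filter_filter]
        exact hA c c' (Ne.symm hc') 0 y
      rw [Finset.sum_congr rfl (fun y _ => hval y)]
      simp [Finset.sum_const, mul_comm]
    -- sum of x over all rows
    have hsum1 : ∑ i : Fin (lam * n ^ 2), x i = k * (lam * n) := by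
      have h1 : ∀ i : Fin (lam * n ^ 2), x i = ∑ c : Fin k, if A i c = 0 then 1 else 0 := by
        intro i
        rw [show x i = (Finset.univ.filter (fun c => A i c = 0)).card from rfl,
          Finset.card_filter]
      rw [Finset.sum_congr rfl (fun i _ => h1 i), Finset.sum_comm]
      have h2 : ∀ c : Fin k, (∑ i : Fin (lam * n ^ 2), if A i c = 0 then 1 else 0) = lam * n := by
        intro c
        rw [← Finset.card_filter]
        exact hcol c
      rw [Finset.sum_congr rfl (fun c _ => h2 c)]
      simp [Finset.sum_const, mul_comm]
    -- sum of x^2 over all rows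
    have hsum2 : ∑ i : Fin (lam * n ^ 2), x i * x i = k * (lam * n) + k * ((k - 1) * lam) := by
      have hexp : ∀ i : Fin (lam * n ^ 2), x i * x i =
          ∑ c₁ : Fin k, ∑ c₂ : Fin k, if A i c₁ = 0 ∧ A i c₂ = 0 then 1 else 0 := by
        intro i
        have h1 : x i = ∑ c : Fin k, if A i c = 0 then 1 else 0 := by
          rw [show x i = (Finset.univ.filter (fun c => A i c = 0)).card from rfl,
            Finset.card_filter]
        rw [h1, Finset.sum_mul_sum]
        refine Finset.sum_congr rfl (fun c₁ _ => Finset.sum_congr rfl (fun c₂ _ => ?_))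
        by_cases h₁ : A i c₁ = 0 <;> by_cases h₂ : A i c₂ = 0 <;> simp [h₁, h₂]
      rw [Finset.sum_congr rfl (fun i _ => hexp i), Finset.sum_comm]
      have hc1 : ∀ c₁ : Fin k,
          (∑ i : Fin (lam * n ^ 2), ∑ c₂ : Fin k, if A i c₁ = 0 ∧ A i c₂ = 0 then 1 else 0)
            = lam * n + (k - 1) * lam := by
        intro c₁
        rw [Finset.sum_comm]
        have hswap : ∀ c₂ : Fin k,
            (∑ i : Fin (lam * n ^ 2), if A i c₁ = 0 ∧ A i c₂ = 0 then 1 else 0)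
              = (Finset.univ.filter (fun i => A i c₁ = 0 ∧ A i c₂ = 0)).card := by
          intro c₂; rw [Finset.card_filter]
        rw [Finset.sum_congr rfl (fun c₂ _ => hswap c₂)]
        rw [← Finset.add_sum_erase (Finset.univ) _ (Finset.mem_univ c₁)]
        have hdiag : (Finset.univ.filter
            (fun i => A i c₁ = (0 : Fin n) ∧ A i c₁ = (0 : Fin n))).card = lam * n := by
          simp only [and_self]
          exact hcol c₁
        rw [hdiag]
        have hoff : ∀ c₂ ∈ Finset.univ.erase c₁,
            (Finset.univ.filter (fun i => A i c₁ = (0 : Fin n)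
              ∧ A i c₂ = (0 : Fin n))).card = lam := by
          intro c₂ hc₂
          exact hA c₁ c₂ (Ne.symm (Finset.ne_of_mem_erase hc₂)) 0 0
        rw [Finset.sum_congr rfl hoff]
        simp [Finset.sum_const, Finset.card_erase_of_mem, mul_comm]
      rw [Finset.sum_congr rfl (fun c₁ _ => hc1 c₁)]
      simp [Finset.sum_const, mul_add]
    -- split rows into repeated (zero) rows and the rest
    set Z : Finset (Fin (lam * n ^ 2)) := Finset.univ.filter (fun i => A i = fun _ => (0 : Fin n))
      with hZ
    set S : Finset (Fin (lam * n ^ 2)) := Finset.univ.filter (fun i => ¬ A i = fun _ => (0 : Fin n))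
      with hS
    have hZcard : Z.card = m := hcard
    have hZval : ∀ i ∈ Z, x i = k := by
      intro i hi
      have hAi : A i = fun _ => (0 : Fin n) := (Finset.mem_filter.mp hi).2
      have : ∀ c : Fin k, A i c = 0 := fun c => congrFun hAi c
      simp [hxdef, this]
    have hcards : Z.card + S.card = lam * n ^ 2 := by
      rw [hZ, hS]
      rw [Finset.card_filter_add_card_filter_not]
      simp
    have hsplit1 : (∑ i ∈ Z, x i) + (∑ i ∈ S, x i) = k * (lam * n) := by
      rw [← hsum1, hZ, hS, Finset.sum_filter_add_sum_filter_not]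
    have hsplit2 : (∑ i ∈ Z, x i * x i) + (∑ i ∈ S, x i * x i)
        = k * (lam * n) + k * ((k - 1) * lam) := by
      rw [← hsum2, hZ, hS, Finset.sum_filter_add_sum_filter_not]
    have hZsum1 : ∑ i ∈ Z, x i = m * k := by
      rw [Finset.sum_congr rfl hZval, Finset.sum_const, hZcard, smul_eq_mul]
    have hZsum2 : ∑ i ∈ Z, x i * x i = m * (k * k) := by
      rw [Finset.sum_congr rfl (fun i hi => by rw [hZval i hi]),
        Finset.sum_const, hZcard, smul_eq_mul]
    -- cast everything to ℤ
    have eS1 : (∑ i ∈ S, ((x i : ℕ) : ℤ)) = (k : ℤ) * lam * n - m * k := by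
      have := hsplit1
      rw [hZsum1] at this
      have := congrArg (Nat.cast : ℕ → ℤ) this
      push_cast at this
      linarith
    have eS2 : (∑ i ∈ S, ((x i : ℕ) : ℤ) * ((x i : ℕ) : ℤ))
        = (k : ℤ) * lam * n + (k : ℤ) * ((k : ℤ) - 1) * lam - m * k * k := by
      have h := hsplit2
      rw [hZsum2] at h
      have h2 := congrArg (Nat.cast : ℕ → ℤ) h
      push_cast [Nat.cast_sub hk1] at h2
      linarith
    have eC : ((S.card : ℕ) : ℤ) = (lam : ℤ) * n ^ 2 - m := by
      have h2 := congrArg (Nat.cast : ℕ → ℤ) hcards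
      rw [hZcard] at h2
      push_cast at h2
      linarith
    -- the variance-type identity : each non-repeated row agrees with 0-row
    -- exactly (k-1)/n times
    have hkey : ∑ i ∈ S, ((n : ℤ) * (x i : ℤ) - ((k : ℤ) - 1)) ^ 2 = 0 := by
      have hexpand : ∑ i ∈ S, ((n : ℤ) * (x i : ℤ) - ((k : ℤ) - 1)) ^ 2
          = (n : ℤ) ^ 2 * (∑ i ∈ S, ((x i : ℕ) : ℤ) * ((x i : ℕ) : ℤ))
            - 2 * n * ((k : ℤ) - 1) * (∑ i ∈ S, ((x i : ℕ) : ℤ))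
            + ((k : ℤ) - 1) ^ 2 * (S.card : ℤ) := by
        calc ∑ i ∈ S, ((n : ℤ) * (x i : ℤ) - ((k : ℤ) - 1)) ^ 2
            = ∑ i ∈ S, ((n : ℤ) ^ 2 * (((x i : ℕ) : ℤ) * ((x i : ℕ) : ℤ))
                - 2 * n * ((k : ℤ) - 1) * ((x i : ℕ) : ℤ) + ((k : ℤ) - 1) ^ 2) :=
              Finset.sum_congr rfl (fun i _ => by ring)
          _ = _ := by
              rw [Finset.sum_add_distrib, Finset.sum_sub_distrib, ← Finset.mul_sum,
                ← Finset.mul_sum, Finset.sum_const, nsmul_eq_mul,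
                mul_comm ((S.card : ℤ))]
      rw [hexpand, eS1, eS2, eC]
      linear_combination (-((k : ℤ) * ((n : ℤ) - 1) + 1)) * heqZ
    -- S is nonempty
    have hSne : S.Nonempty := by
      rw [← Finset.card_pos]
      have h3 : 3 ≤ k * (n - 1) + 1 := by
        have : 2 * 1 ≤ k * (n - 1) := Nat.mul_le_mul hk (by omega)
        omega
      have : m * 3 ≤ m * (k * (n - 1) + 1) := Nat.mul_le_mul_left m h3
      omega
    obtain ⟨i, hi⟩ := hSne
    have hterm : ((n : ℤ) * (x i : ℤ) - ((k : ℤ) - 1)) ^ 2 = 0 := by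
      have hnonneg : ∀ j ∈ S, (0 : ℤ) ≤ ((n : ℤ) * (x j : ℤ) - ((k : ℤ) - 1)) ^ 2 :=
        fun j _ => sq_nonneg _
      exact (Finset.sum_eq_zero_iff_of_nonneg hnonneg).mp hkey i hi
    have hx : (n : ℤ) * (x i : ℤ) = (k : ℤ) - 1 := by
      have := pow_eq_zero_iff (n := 2) (by norm_num) |>.mp hterm
      linarith [sub_eq_zero.mp this]
    have hdvdZ : (n : ℤ) ∣ ((k - 1 : ℕ) : ℤ) := by
      refine ⟨(x i : ℤ), ?_⟩
      rw [Nat.cast_sub hk1]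
      push_cast
      linarith
    exact_mod_cast hdvdZ
end

section
/- If (m, λ, k, n) is a basic quadruple with m > 1 and n prime, then m = n, and moreover k = ns+1 and λ = (n−1)s+1 for some positive integer s with gcd(n, s−1) = 1. -/
/-- A quadruple of positive integers `(m, λ, k, n)` is feasible if `k ≥ 2`, `n ≥ 2`,
`m = λ n² / (k(n-1)+1)`, and `(k-1)/n` is a positive integer. -/
def Feasible (m lam k n : ℕ) : Prop :=
  0 < m ∧ 0 < lam ∧ 2 ≤ k ∧ 2 ≤ n ∧
    m * (k * (n - 1) + 1) = lam * n ^ 2 ∧ n ∣ k - 1 ∧ 1 ≤ (k - 1) / n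

/-- A feasible quadruple is basic if moreover `gcd(m, λ) = 1`. -/
def Basic (m lam k n : ℕ) : Prop :=
  Feasible m lam k n ∧ Nat.gcd m lam = 1

theorem stmt4 (m lam k n : ℕ) (hb : Basic m lam k n) (hm : 1 < m)
    (hp : n.Prime) :
    m = n ∧ ∃ s : ℕ, 0 < s ∧ k = n * s + 1 ∧ lam = (n - 1) * s + 1 ∧
      Nat.gcd n (s - 1) = 1 := by
  obtain ⟨⟨hm0, hl0, hk2, hn2, heq, hdvd, hdiv⟩, hg⟩ := hb
  obtain ⟨u, rfl⟩ : ∃ u, n = u + 1 := ⟨n - 1, by omega⟩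
  set t := (k - 1) / (u + 1) with ht
  have ht1 : 1 ≤ t := hdiv
  have hkt : t * (u + 1) = k - 1 := Nat.div_mul_cancel hdvd
  clear_value t
  have hk : k = (u + 1) * t + 1 := by
    rw [mul_comm, hkt]; omega
  subst hk
  simp only [Nat.add_sub_cancel] at heq
  have h2 : (m * (t * u + 1)) * (u + 1) = (lam * (u + 1)) * (u + 1) := by
    calc (m * (t * u + 1)) * (u + 1) = m * (((u + 1) * t + 1) * (u + 1 - 1) + 1) := by
          simp only [Nat.add_sub_cancel]; ring
      _ = lam * (u + 1) ^ 2 := heq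
      _ = (lam * (u + 1)) * (u + 1) := by ring
  have h1 : m * (t * u + 1) = lam * (u + 1) := Nat.eq_of_mul_eq_mul_right (by omega) h2
  have hmdvd : m ∣ lam * (u + 1) := ⟨t * u + 1, h1.symm⟩
  have hmn : m ∣ u + 1 := (Nat.Coprime.dvd_of_dvd_mul_left hg hmdvd)
  have hmeq : m = u + 1 := by
    rcases (hp.eq_one_or_self_of_dvd m hmn) with h | h
    · omega
    · exact h
  subst hmeq
  have hlam : lam = t * u + 1 := by
    have hx : (t * u + 1) * (u + 1) = lam * (u + 1) := by
      rw [mul_comm (t * u + 1)]; exact h1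
    exact (Nat.eq_of_mul_eq_mul_right (by omega) hx).symm
  refine ⟨rfl, t, ht1, rfl, ?_, ?_⟩
  · show lam = u * t + 1
    rw [hlam, mul_comm]
  refine (Nat.Prime.coprime_iff_not_dvd hp).mpr ?_
  intro hd
  have hA : (u + 1) ∣ lam + (t - 1) := by
    have he : lam + (t - 1) = t * (u + 1) := by
      rw [hlam]
      have : t * (u + 1) = t * u + t := by ring
      omega
    rw [he]; exact dvd_mul_left (u + 1) t
  have hdl : (u + 1) ∣ lam := by
    have := Nat.dvd_sub hA hd
    simpa using this
  have : (u + 1) ∣ Nat.gcd (u + 1) lam := Nat.dvd_gcd dvd_rfl hdl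
  rw [hg] at this
  have := Nat.le_of_dvd one_pos this
  omega
end

section
/- If (m, λ, k, 2) is a basic quadruple with m > 1, then m = 2, and there exists a positive integer t such that λ = 2t+1 and k = 4t+1. -/
theorem stmt5 (m lam k : ℕ) (hb : Basic m lam k 2) (hm : 1 < m) :
    m = 2 ∧ ∃ t : ℕ, 0 < t ∧ lam = 2 * t + 1 ∧ k = 4 * t + 1 := by
  obtain ⟨⟨hm0, hl0, hk2, -, heq, hdvd, hquo⟩, hg⟩ := hb
  have heq' : m * (k + 1) = lam * 4 := by norm_num at heq; linarith
  have hk3 : 3 ≤ k := by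
    rcases hdvd with ⟨c, hc⟩
    rw [hc, Nat.mul_div_cancel_left _ (by norm_num)] at hquo
    omega
  have hmd : m ∣ 4 := by
    have : m ∣ lam * 4 := ⟨k + 1, heq'.symm⟩
    exact (Nat.Coprime.dvd_of_dvd_mul_left hg this)
  have hmle : m ≤ 4 := Nat.le_of_dvd (by norm_num) hmd
  interval_cases m
  · -- m = 2
    have hodd : lam % 2 = 1 := by
      rcases Nat.even_or_odd lam with ⟨c, hc⟩ | ⟨c, hc⟩
      · exfalso
        have h2 : (2:ℕ) ∣ Nat.gcd 2 lam := Nat.dvd_gcd dvd_rfl ⟨c, by omega⟩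
        omega
      · omega
    refine ⟨rfl, (lam - 1) / 2, ?_, ?_, ?_⟩ <;> omega
  · exact absurd hmd (by decide)
  · -- m = 4 : then lam = k+1 even, contradiction with coprimality
    exfalso
    have hlam : lam = k + 1 := by omega
    have : 2 ∣ Nat.gcd 4 lam := Nat.dvd_gcd (by norm_num) (by omega)
    omega
end

section
/- For every positive integer t, there exists an OA_{2t+1}(4t+1, 2) containing a row repeated 2 times if and only if there exists a (4t+1, 2t+1, 2t+1)-BIBD. -/
/-- A `(v, κ, μ)`-BIBD with `b` blocks: a family of `κ`-subsets of a `v`-set such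
that every pair of distinct points lies in exactly `μ` blocks. -/
def IsBIBD (v b κ μ : ℕ) (B : Fin b → Finset (Fin v)) : Prop :=
  (∀ i, (B i).card = κ) ∧
  ∀ x y : Fin v, x ≠ y →
    (Finset.univ.filter (fun i => x ∈ B i ∧ y ∈ B i)).card = μ

open Finset

lemma card_filter_equiv {α β : Type*} [Fintype α] [Fintype β] (e : α ≃ β)
    (p : β → Prop) [DecidablePred p] :
    (univ.filter fun a => p (e a)).card = (univ.filter p).card := by
  apply Finset.card_bij' (fun a _ => e a) (fun b _ => e.symm b) <;> simp

lemma card_filter_subtype {α : Type*} [DecidableEq α] (s : Finset α)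
    (P : α → Prop) [DecidablePred P] :
    ((univ : Finset {x // x ∈ s}).filter fun x => P x.1).card = (s.filter P).card := by
  apply Finset.card_bij (fun x _ => x.1)
  · intro a ha
    simp only [Finset.mem_filter, Finset.mem_univ, true_and] at ha
    exact Finset.mem_filter.mpr ⟨a.2, ha⟩
  · intro a _ b _ h; exact Subtype.ext h
  · intro c hc
    simp only [Finset.mem_filter] at hc
    exact ⟨⟨c, hc.1⟩, by simp [hc.2], rfl⟩

lemma ite_one_mul_ite_one (p q : Prop) [Decidable p] [Decidable q] :
    ((if p then (1 : ℕ) else 0) * (if q then 1 else 0)) = if p ∧ q then 1 else 0 := by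
  by_cases hp : p <;> by_cases hq : q <;> simp [hp, hq]

lemma oa_to_bibd (t : ℕ) (ht : 0 < t)
    (A : Fin ((2 * t + 1) * 2 ^ 2) → Fin (4 * t + 1) → Fin 2)
    (hOA : IsOA (2 * t + 1) (4 * t + 1) 2 A)
    (r : Fin (4 * t + 1) → Fin 2)
    (hr : (Finset.univ.filter (fun i => A i = r)).card = 2) :
    ∃ b : ℕ, ∃ B : Fin b → Finset (Fin (4 * t + 1)),
      IsBIBD (4 * t + 1) b (2 * t + 1) (2 * t + 1) B := by
  classical
  set A' : Fin ((2 * t + 1) * 2 ^ 2) → Fin (4 * t + 1) → Fin 2 :=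
    fun i c => A i c - r c with hA'
  have hOA' : IsOA (2 * t + 1) (4 * t + 1) 2 A' := by
    intro c1 c2 h x y
    have heq : (univ.filter fun i => A' i c1 = x ∧ A' i c2 = y) =
        (univ.filter fun i => A i c1 = x + r c1 ∧ A i c2 = y + r c2) :=
      Finset.filter_congr fun i _ => by simp only [hA', sub_eq_iff_eq_add]
    rw [heq]
    exact hOA c1 c2 h (x + r c1) (y + r c2)
  -- column counts
  have colcount : ∀ (c : Fin (4 * t + 1)) (x : Fin 2),
      (univ.filter fun i => A' i c = x).card = 4 * t + 2 := by
    intro c x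
    haveI : Nontrivial (Fin (4 * t + 1)) := by
      apply Fin.nontrivial_iff_two_le.mpr; omega
    obtain ⟨c₂, hc₂⟩ := exists_ne c
    have split := Finset.card_filter_add_card_filter_not
      (s := univ.filter (fun i => A' i c = x)) (p := fun i => A' i c₂ = 0)
    rw [Finset.filter_filter, Finset.filter_filter] at split
    have e1 : (univ.filter fun i => A' i c = x ∧ A' i c₂ = 0).card = 2 * t + 1 :=
      hOA' c c₂ (Ne.symm hc₂) x 0
    have e2 : (univ.filter fun i => A' i c = x ∧ ¬(A' i c₂ = 0)).card = 2 * t + 1 := by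
      rw [show (univ.filter fun i => A' i c = x ∧ ¬(A' i c₂ = 0)) =
          (univ.filter fun i => A' i c = x ∧ A' i c₂ = 1) from
        Finset.filter_congr fun i _ => by
          constructor
          · rintro ⟨h1, h2⟩; exact ⟨h1, by omega⟩
          · rintro ⟨h1, h2⟩; exact ⟨h1, by omega⟩]
      exact hOA' c c₂ (Ne.symm hc₂) x 1
    omega
  set d : Fin ((2 * t + 1) * 2 ^ 2) → ℕ :=
    fun i => (univ.filter fun c => A' i c = 1).card with hd
  have hS1 : ∑ i, d i = (4 * t + 1) * (4 * t + 2) := by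
    have swap : (∑ i, d i) =
        ∑ c : Fin (4 * t + 1), (univ.filter fun i => A' i c = 1).card := by
      simp only [hd, Finset.card_filter]
      exact Finset.sum_comm
    rw [swap, Finset.sum_congr rfl (fun c _ => colcount c 1), Finset.sum_const,
      Finset.card_univ, Fintype.card_fin, smul_eq_mul]
  have hS2 : ∑ i, d i * d i = (4 * t + 1) * ((2 * t + 1) * (4 * t + 1) + (2 * t + 1)) := by
    have expand : ∀ i ∈ (univ : Finset (Fin ((2 * t + 1) * 2 ^ 2))), d i * d i =
        ∑ c1 : Fin (4 * t + 1), ∑ c2 : Fin (4 * t + 1),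
          (if A' i c1 = 1 ∧ A' i c2 = 1 then 1 else 0) := by
      intro i _
      simp only [hd, Finset.card_filter]
      rw [Fintype.sum_mul_sum]
      exact Finset.sum_congr rfl fun c1 _ => Finset.sum_congr rfl fun c2 _ =>
        ite_one_mul_ite_one _ _
    rw [Finset.sum_congr rfl expand, Finset.sum_comm]
    rw [Finset.sum_congr rfl fun c1 _ => Finset.sum_comm]
    have inner : ∀ c1 c2 : Fin (4 * t + 1),
        (∑ i, if A' i c1 = 1 ∧ A' i c2 = 1 then 1 else 0) =
          if c1 = c2 then 4 * t + 2 else 2 * t + 1 := by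
      intro c1 c2
      rw [← Finset.card_filter]
      by_cases h : c1 = c2
      · subst h
        rw [if_pos rfl, show (univ.filter fun i => A' i c1 = 1 ∧ A' i c1 = 1) =
            (univ.filter fun i => A' i c1 = 1) from
          Finset.filter_congr fun i _ => by simp]
        exact colcount c1 1
      · rw [if_neg h]
        exact hOA' c1 c2 h 1 1
    rw [Finset.sum_congr rfl fun c1 _ => Finset.sum_congr rfl fun c2 _ => inner c1 c2]
    have row : ∀ c1 ∈ (univ : Finset (Fin (4 * t + 1))),
        (∑ c2 : Fin (4 * t + 1), if c1 = c2 then 4 * t + 2 else 2 * t + 1) =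
          (2 * t + 1) * (4 * t + 1) + (2 * t + 1) := by
      intro c1 _
      rw [Finset.sum_congr rfl (fun c2 _ =>
        show (if c1 = c2 then 4 * t + 2 else 2 * t + 1) =
            (2 * t + 1) + (if c1 = c2 then 2 * t + 1 else 0) from by
          split_ifs <;> omega)]
      rw [Finset.sum_add_distrib, Finset.sum_const, Finset.sum_ite_eq,
        Finset.card_univ, Fintype.card_fin]
      simp [mul_comm]
    rw [Finset.sum_congr rfl row, Finset.sum_const, Finset.card_univ, Fintype.card_fin,
      smul_eq_mul]
  -- variance argument over ℤ
  have hS1' : ∑ i, (d i : ℤ) = ((4 * t + 1) * (4 * t + 2) : ℕ) := by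
    exact_mod_cast congrArg (Nat.cast : ℕ → ℤ) hS1
  have hS2' : ∑ i, (d i : ℤ) * (d i : ℤ) =
      (((4 * t + 1) * ((2 * t + 1) * (4 * t + 1) + (2 * t + 1))) : ℕ) := by
    exact_mod_cast congrArg (Nat.cast : ℕ → ℤ) hS2
  have hvar : ∑ i, ((d i : ℤ) - (2 * (t : ℤ) + 1)) ^ 2 = 2 * (2 * (t : ℤ) + 1) ^ 2 := by
    have expand : ∀ i ∈ (univ : Finset (Fin ((2 * t + 1) * 2 ^ 2))),
        ((d i : ℤ) - (2 * (t : ℤ) + 1)) ^ 2 =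
          (d i : ℤ) * (d i : ℤ) - (2 * (2 * (t : ℤ) + 1)) * (d i : ℤ)
            + (2 * (t : ℤ) + 1) ^ 2 :=
      fun i _ => by ring
    rw [Finset.sum_congr rfl expand, Finset.sum_add_distrib, Finset.sum_sub_distrib,
      ← Finset.mul_sum, hS1', hS2', Finset.sum_const, Finset.card_univ, Fintype.card_fin,
      nsmul_eq_mul]
    push_cast
    ring
  have hzsum : ∑ i ∈ univ.filter (fun i => A i = r), ((d i : ℤ) - (2 * (t : ℤ) + 1)) ^ 2 =
      2 * (2 * (t : ℤ) + 1) ^ 2 := by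
    have hdz : ∀ i ∈ univ.filter (fun i => A i = r),
        ((d i : ℤ) - (2 * (t : ℤ) + 1)) ^ 2 = (2 * (t : ℤ) + 1) ^ 2 := by
      intro i hi
      rw [Finset.mem_filter] at hi
      have hzero : d i = 0 := by
        simp only [hd]
        rw [Finset.card_eq_zero, Finset.filter_eq_empty_iff]
        intro c _
        simp only [hA', hi.2, sub_self]
        decide
      rw [hzero]
      push_cast
      ring
    rw [Finset.sum_congr rfl hdz, Finset.sum_const, hr]
    push_cast
    ring
  have hothers : ∑ i ∈ univ.filter (fun i => ¬(A i = r)),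
      ((d i : ℤ) - (2 * (t : ℤ) + 1)) ^ 2 = 0 := by
    have hsp := Finset.sum_filter_add_sum_filter_not univ (fun i => A i = r)
      (fun i => ((d i : ℤ) - (2 * (t : ℤ) + 1)) ^ 2)
    rw [hzsum, hvar] at hsp
    linarith
  have hdval : ∀ i ∈ univ.filter (fun i => ¬(A i = r)), d i = 2 * t + 1 := by
    intro i hi
    have h0 := (Finset.sum_eq_zero_iff_of_nonneg
      (fun i _ => sq_nonneg ((d i : ℤ) - (2 * (t : ℤ) + 1)))).mp hothers i hi
    have h1 : (d i : ℤ) - (2 * (t : ℤ) + 1) = 0 := by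
      exact pow_eq_zero_iff (two_ne_zero) |>.mp h0
    omega
  -- build the BIBD
  set others : Finset (Fin ((2 * t + 1) * 2 ^ 2)) := univ.filter (fun i => ¬(A i = r))
    with hoth
  let e : Fin others.card ≃ {x // x ∈ others} := others.equivFin.symm
  refine ⟨others.card, fun j => univ.filter (fun c => A' (e j).1 c = 1), ?_, ?_⟩
  · intro j
    exact hdval _ (e j).2
  · intro x y hxy
    have hpred : (univ.filter fun j => x ∈ univ.filter (fun c => A' (e j).1 c = 1) ∧
        y ∈ univ.filter (fun c => A' (e j).1 c = 1)) =
        (univ.filter fun j => A' (e j).1 x = 1 ∧ A' (e j).1 y = 1) := by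
      apply Finset.filter_congr
      intro j _
      simp
    rw [hpred, card_filter_equiv e (fun s => A' s.1 x = 1 ∧ A' s.1 y = 1),
      card_filter_subtype others (fun i => A' i x = 1 ∧ A' i y = 1)]
    have hsame : others.filter (fun i => A' i x = 1 ∧ A' i y = 1) =
        univ.filter (fun i => A' i x = 1 ∧ A' i y = 1) := by
      ext i
      simp only [hoth, Finset.filter_filter, Finset.mem_filter, Finset.mem_univ, true_and]
      constructor
      · rintro ⟨_, h⟩; exact h
      · intro h
        refine ⟨?_, h⟩
        intro hir
        have h0 : A' i x = 0 := by simp [hA', hir]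
        rw [h.1] at h0
        exact absurd h0 (by decide)
    rw [hsame]
    exact hOA' x y hxy 1 1

lemma bibd_repl (t b : ℕ) (ht : 0 < t) (B : Fin b → Finset (Fin (4 * t + 1)))
    (hB : IsBIBD (4 * t + 1) b (2 * t + 1) (2 * t + 1) B) (x : Fin (4 * t + 1)) :
    (univ.filter fun i => x ∈ B i).card = 4 * t + 2 := by
  have key : ∑ i : Fin b, ∑ y : Fin (4 * t + 1),
      (if y ≠ x ∧ x ∈ B i ∧ y ∈ B i then 1 else 0) =
      (univ.filter fun i => x ∈ B i).card * (2 * t) := by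
    rw [Finset.card_eq_sum_ones, Finset.sum_mul, one_mul,
      Finset.sum_filter]
    apply Finset.sum_congr rfl
    intro i _
    by_cases hx : x ∈ B i
    · rw [if_pos hx]
      have : ∑ y : Fin (4 * t + 1), (if y ≠ x ∧ x ∈ B i ∧ y ∈ B i then 1 else 0) =
          (univ.filter fun y => y ≠ x ∧ x ∈ B i ∧ y ∈ B i).card := by
        rw [Finset.card_filter]
      rw [this]
      have h2 : univ.filter (fun y => y ≠ x ∧ x ∈ B i ∧ y ∈ B i) = (B i).erase x := by
        ext y; simp [Finset.mem_erase, hx, and_comm]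
      rw [h2, Finset.card_erase_of_mem hx, hB.1 i]
      omega
    · simp [hx]
  have key2 : ∑ y : Fin (4 * t + 1), ∑ i : Fin b,
      (if y ≠ x ∧ x ∈ B i ∧ y ∈ B i then 1 else 0) = (4 * t) * (2 * t + 1) := by
    have : ∀ y : Fin (4 * t + 1), ∑ i : Fin b,
        (if y ≠ x ∧ x ∈ B i ∧ y ∈ B i then 1 else 0) =
        if y ≠ x then 2 * t + 1 else 0 := by
      intro y
      by_cases hy : y = x
      · simp [hy]
      · rw [if_pos hy]
        have : ∑ i : Fin b, (if y ≠ x ∧ x ∈ B i ∧ y ∈ B i then 1 else 0) =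
            (univ.filter fun i => x ∈ B i ∧ y ∈ B i).card := by
          rw [Finset.card_filter]
          exact Finset.sum_congr rfl fun i _ => by simp [hy]
        rw [this, hB.2 x y (Ne.symm hy)]
    rw [Finset.sum_congr rfl fun y _ => this y, Finset.sum_ite, Finset.sum_const,
      Finset.sum_const]
    have : (univ.filter fun y : Fin (4 * t + 1) => y ≠ x).card = 4 * t := by
      rw [Finset.filter_ne' univ x, Finset.card_erase_of_mem (Finset.mem_univ x),
        Finset.card_univ, Fintype.card_fin]
      omega
    simp [this]
  rw [Finset.sum_comm] at key
  rw [key] at key2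
  have h2t : 0 < 2 * t := by omega
  -- R * 2t = 4t(2t+1)  =>  R = 4t+2
  have : (univ.filter fun i => x ∈ B i).card * (2 * t) = (4 * t + 2) * (2 * t) := by
    rw [key2]; ring
  exact Nat.eq_of_mul_eq_mul_right h2t this

lemma bibd_b (t b : ℕ) (ht : 0 < t) (B : Fin b → Finset (Fin (4 * t + 1)))
    (hB : IsBIBD (4 * t + 1) b (2 * t + 1) (2 * t + 1) B) : b = 8 * t + 2 := by
  have key : ∑ i : Fin b, ∑ x : Fin (4 * t + 1), (if x ∈ B i then 1 else 0) =
      b * (2 * t + 1) := by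
    have : ∀ i : Fin b, ∑ x : Fin (4 * t + 1), (if x ∈ B i then 1 else 0) = 2 * t + 1 := by
      intro i
      rw [← Finset.card_filter]
      rw [show univ.filter (fun x => x ∈ B i) = B i from by ext y; simp]
      exact hB.1 i
    rw [Finset.sum_congr rfl fun i _ => this i, Finset.sum_const, Finset.card_univ,
      Fintype.card_fin, smul_eq_mul]
  rw [Finset.sum_comm] at key
  have key2 : ∑ x : Fin (4 * t + 1), ∑ i : Fin b, (if x ∈ B i then 1 else 0) =
      (4 * t + 1) * (4 * t + 2) := by
    have : ∀ x : Fin (4 * t + 1), ∑ i : Fin b, (if x ∈ B i then 1 else 0) = 4 * t + 2 := by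
      intro x; rw [← Finset.card_filter]; exact bibd_repl t b ht B hB x
    rw [Finset.sum_congr rfl fun x _ => this x, Finset.sum_const, Finset.card_univ,
      Fintype.card_fin, smul_eq_mul]
  rw [key] at key2
  have : b * (2 * t + 1) = (8 * t + 2) * (2 * t + 1) := by rw [key2]; ring
  exact Nat.eq_of_mul_eq_mul_right (by omega) this

lemma card_filter_sum {α β : Type*} [Fintype α] [Fintype β]
    (p : α ⊕ β → Prop) [DecidablePred p] :
    (univ.filter p).card =
      (univ.filter fun a => p (Sum.inl a)).card +
      (univ.filter fun b => p (Sum.inr b)).card := by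
  rw [← Finset.card_toLeft_add_card_toRight (u := univ.filter p),
    show (univ.filter p).toLeft = univ.filter (fun a => p (Sum.inl a)) from by ext x; simp,
    show (univ.filter p).toRight = univ.filter (fun b => p (Sum.inr b)) from by ext x; simp]

lemma fin2cases (x : Fin 2) : x = 0 ∨ x = 1 := by omega

lemma ite1_eq_one {p : Prop} [Decidable p] : ((if p then (1 : Fin 2) else 0) = 1) ↔ p := by
  split <;> simp_all

lemma ite1_eq_zero {p : Prop} [Decidable p] : ((if p then (1 : Fin 2) else 0) = 0) ↔ ¬p := by
  split <;> simp_all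

/-- rows of the OA built from a BIBD: blocks' indicator vectors plus two zero rows -/
def OArows {v b : ℕ} (B : Fin b → Finset (Fin v)) : Fin b ⊕ Fin 2 → Fin v → Fin 2
  | .inl i => fun c => if c ∈ B i then 1 else 0
  | .inr _ => fun _ => 0

lemma bibd_to_oa (t : ℕ) (ht : 0 < t) (b : ℕ) (B : Fin b → Finset (Fin (4 * t + 1)))
    (hB : IsBIBD (4 * t + 1) b (2 * t + 1) (2 * t + 1) B) :
    ∃ A : Fin ((2 * t + 1) * 2 ^ 2) → Fin (4 * t + 1) → Fin 2,
      IsOA (2 * t + 1) (4 * t + 1) 2 A ∧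
      ∃ r, (Finset.univ.filter (fun i => A i = r)).card = 2 := by
  have hb := bibd_b t b ht B hB
  have hcool : (2 * t + 1) * 2 ^ 2 = b + 2 := by subst hb; ring
  let e : Fin ((2 * t + 1) * 2 ^ 2) ≃ (Fin b ⊕ Fin 2) :=
    (finCongr hcool).trans finSumFinEquiv.symm
  refine ⟨fun i => OArows B (e i), ?_, (fun _ => 0), ?_⟩
  · intro c1 c2 hne x y
    -- per-pair block counts
    have h11 : (univ.filter fun i : Fin b => c1 ∈ B i ∧ c2 ∈ B i).card = 2 * t + 1 :=
      hB.2 c1 c2 hne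
    have split1 := Finset.card_filter_add_card_filter_not
      (s := univ.filter (fun i : Fin b => c1 ∈ B i)) (p := fun i => c2 ∈ B i)
    rw [Finset.filter_filter, Finset.filter_filter,
      bibd_repl t b ht B hB c1] at split1
    have h10 : (univ.filter fun i : Fin b => c1 ∈ B i ∧ ¬(c2 ∈ B i)).card = 2 * t + 1 := by
      omega
    have split2 := Finset.card_filter_add_card_filter_not
      (s := univ.filter (fun i : Fin b => c2 ∈ B i)) (p := fun i => c1 ∈ B i)
    rw [Finset.filter_filter, Finset.filter_filter,
      bibd_repl t b ht B hB c2,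
      show (univ.filter fun i : Fin b => c2 ∈ B i ∧ c1 ∈ B i) =
        (univ.filter fun i : Fin b => c1 ∈ B i ∧ c2 ∈ B i) from by
          apply Finset.filter_congr; intro i _; exact and_comm,
      show (univ.filter fun i : Fin b => c2 ∈ B i ∧ ¬(c1 ∈ B i)) =
        (univ.filter fun i : Fin b => ¬(c1 ∈ B i) ∧ c2 ∈ B i) from by
          apply Finset.filter_congr; intro i _; exact and_comm] at split2
    have h01 : (univ.filter fun i : Fin b => ¬(c1 ∈ B i) ∧ c2 ∈ B i).card = 2 * t + 1 := by
      omega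
    have split3 := Finset.card_filter_add_card_filter_not
      (s := (univ : Finset (Fin b))) (p := fun i => c1 ∈ B i)
    rw [Finset.card_univ, Fintype.card_fin, bibd_repl t b ht B hB c1] at split3
    have split4 := Finset.card_filter_add_card_filter_not
      (s := univ.filter (fun i : Fin b => ¬(c1 ∈ B i))) (p := fun i => c2 ∈ B i)
    rw [Finset.filter_filter, Finset.filter_filter] at split4
    have h00 : (univ.filter fun i : Fin b => ¬(c1 ∈ B i) ∧ ¬(c2 ∈ B i)).card = 2 * t - 1 := by
      omega
    rw [card_filter_equiv e (fun s => OArows B s c1 = x ∧ OArows B s c2 = y),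
      card_filter_sum]
    rcases fin2cases x with hx | hx <;> rcases fin2cases y with hy | hy <;>
      subst hx <;> subst hy <;>
      simp only [OArows, ite1_eq_one, ite1_eq_zero,
        show (0 : Fin 2) = 1 ↔ False from by decide,
        show (0 : Fin 2) = 0 ↔ True from by decide] <;>
      simp only [and_true, and_false, true_and, false_and, Finset.filter_false,
        Finset.filter_true, Finset.card_empty, Finset.card_univ, Fintype.card_fin]
    · rw [h00]; omega
    · rw [h01]
    · rw [h10]
    · rw [h11]
  · rw [card_filter_equiv e (fun s => OArows B s = fun _ => 0), card_filter_sum]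
    have hleft : (univ.filter fun i : Fin b => OArows B (Sum.inl i) = fun _ => 0) = ∅ := by
      rw [Finset.filter_eq_empty_iff]
      intro i _ h
      have hpos : (B i).Nonempty := Finset.card_pos.mp (by rw [hB.1 i]; omega)
      obtain ⟨c, hc⟩ := hpos
      have := congrFun h c
      simp only [OArows, if_pos hc] at this
      exact absurd this (by decide)
    rw [hleft]
    simp [OArows]


theorem stmt6 (t : ℕ) (ht : 0 < t) :
    (∃ A : Fin ((2 * t + 1) * 2 ^ 2) → Fin (4 * t + 1) → Fin 2,
      IsOA (2 * t + 1) (4 * t + 1) 2 A ∧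
      ∃ r, (Finset.univ.filter (fun i => A i = r)).card = 2) ↔
    (∃ b : ℕ, ∃ B : Fin b → Finset (Fin (4 * t + 1)),
      IsBIBD (4 * t + 1) b (2 * t + 1) (2 * t + 1) B) := by
  constructor
  · rintro ⟨A, hOA, r, hr⟩
    exact oa_to_bibd t ht A hOA r hr
  · rintro ⟨b, B, hB⟩
    exact bibd_to_oa t ht b B hB
end

section
/- Let k, n be integers with n ≥ 2, ā = (k−1)/n a positive integer, λ = C(k−2, ā−1)(n−1)^{k−ā−1} and m = λ − C(k−2, ā−2)(n−1)^{k−ā}. Then m/λ = n²/(k(n−1)+1), i.e., m(k(n−1)+1) = λn². -/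
theorem stmt10 (k n : ℕ) (hk : 2 ≤ k) (hn : 2 ≤ n) (hdvd : n ∣ k - 1)
    (ha : 1 ≤ (k - 1) / n) (hkn : n ^ 2 ≤ k * (n - 1) + 1) :
    (Nat.choose (k - 2) ((k - 1) / n - 1) * (n - 1) ^ (k - (k - 1) / n - 1)
        - (if 2 ≤ (k - 1) / n then
            Nat.choose (k - 2) ((k - 1) / n - 2) * (n - 1) ^ (k - (k - 1) / n)
          else 0)) * (k * (n - 1) + 1)
      = Nat.choose (k - 2) ((k - 1) / n - 1) * (n - 1) ^ (k - (k - 1) / n - 1) * n ^ 2 := by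
  obtain ⟨a, hka⟩ := hdvd
  have hn0 : 0 < n := by omega
  have hdiv : (k - 1) / n = a := by rw [hka, Nat.mul_div_cancel_left _ hn0]
  rw [hdiv] at ha ⊢
  have hk1 : k = n * a + 1 := by rw [← hka]; omega
  subst hk1
  obtain ⟨m, rfl⟩ : ∃ m, n = m + 1 := ⟨n - 1, by omega⟩
  have hm : 1 ≤ m := by omega
  rcases Nat.lt_or_ge a 2 with h2 | h2
  · -- a = 1
    have ha1 : a = 1 := by omega
    subst ha1
    rw [if_neg (by omega)]
    have e1 : (m + 1) * 1 + 1 - 2 = m := by omega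
    have e2 : (m + 1) * 1 + 1 - 1 - 1 = m := by omega
    have e3 : m + 1 - 1 = m := by omega
    rw [e1, e2, e3]
    simp only [Nat.sub_zero, Nat.choose_zero_right, one_mul]
    ring
  · obtain ⟨b, rfl⟩ : ∃ b, a = b + 2 := ⟨a - 2, by omega⟩
    rw [if_pos (by omega)]
    set N := (m + 1) * (b + 2) - 1 with hNdef
    have hN : (m + 1) * (b + 2) = N + 1 := by
      have : 1 ≤ (m + 1) * (b + 2) := Nat.one_le_iff_ne_zero.mpr (by positivity)
      omega
    have e1 : (m + 1) * (b + 2) + 1 - 2 = N := by omega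
    have e2 : b + 2 - 1 = b + 1 := by omega
    have e3 : b + 2 - 2 = b := by omega
    have e4 : (m + 1) * (b + 2) + 1 - (b + 2) - 1 = (b + 2) * m := by
      have h : (m + 1) * (b + 2) = m * (b + 2) + (b + 2) := by ring
      have h2 : m * (b + 2) = (b + 2) * m := by ring
      omega
    have e5 : (m + 1) * (b + 2) + 1 - (b + 2) = (b + 2) * m + 1 := by
      have h : (m + 1) * (b + 2) = m * (b + 2) + (b + 2) := by ring
      have h2 : m * (b + 2) = (b + 2) * m := by ring
      omega
    have e6 : m + 1 - 1 = m := by omega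
    rw [e1, e2, e3, e4, e5, e6]
    set E := (b + 2) * m with hE
    set C := Nat.choose N (b + 1) with hC
    set D := Nat.choose N b with hD
    set t := m ^ E with ht
    -- key binomial identity
    have hkey : C * (b + 1) = D * (E + 1) := by
      have h := Nat.choose_succ_right_eq N b
      have hNb : N - b = E + 1 := by
        have h1 : (m + 1) * (b + 2) = m * (b + 2) + (b + 2) := by ring
        have h2 : m * (b + 2) = (b + 2) * m := by ring
        omega
      rw [hNb] at h
      exact h
    have hP : ((m + 1) * (b + 2) + 1) * m + 1 = (m + 1) * (E + 1) := by
      have h1 : ((m + 1) * (b + 2) + 1) * m = (m + 1) * E + m := by rw [hE]; ring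
      have h2 : (m + 1) * (E + 1) = (m + 1) * E + (m + 1) := by ring
      omega
    rw [hP]
    have hpow : m ^ (E + 1) = t * m := by rw [ht, pow_succ]
    rw [hpow]
    have hE' : C * t * (E + 1) = D * (t * m) * (E + 1) + C * t * (m + 1) := by
      have h : D * (t * m) * (E + 1) = (D * (E + 1)) * (t * m) := by ring
      rw [h, ← hkey, hE]
      ring
    have h0 : D * (t * m) * (E + 1) ≤ C * t * (E + 1) := by
      rw [hE']; exact Nat.le_add_right _ _
    have hle : D * (t * m) * ((m + 1) * (E + 1)) ≤ C * t * ((m + 1) * (E + 1)) := by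
      calc D * (t * m) * ((m + 1) * (E + 1)) = D * (t * m) * (E + 1) * (m + 1) := by ring
        _ ≤ C * t * (E + 1) * (m + 1) := Nat.mul_le_mul_right _ h0
        _ = C * t * ((m + 1) * (E + 1)) := by ring
    rw [Nat.sub_mul]
    rw [Nat.sub_eq_iff_eq_add hle]
    have : C * t * ((m + 1) * (E + 1)) = (C * t * (E + 1)) * (m + 1) := by ring
    rw [this, hE']
    ring
end

section
/- Suppose n² ≤ k(n−1)+1 and ā = (k−1)/n is a positive integer. Then there exists an OA_λ(k,n) with λ = C(k−2, ā−1)(n−1)^{k−ā−1} containing a row repeated m = λn²/(k(n−1)+1) times, namely the array of all k-tuples over {0,1,…,n−1} having exactly ā entries equal to 0, together with m additional rows consisting entirely of 0's. -/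
open Finset

variable {n : ℕ} [NeZero n]

/-- number of functions with prescribed zero set -/
lemma fiber_card {α : Type*} [Fintype α] [DecidableEq α] (s : Finset α) :
    (univ.filter (fun v : α → Fin n => univ.filter (fun i => v i = 0) = s)).card
      = (n - 1) ^ (Fintype.card α - s.card) := by
  rw [← Fintype.card_subtype]
  have e1 : {v : α → Fin n // univ.filter (fun i => v i = 0) = s}
      ≃ {v : α → Fin n // ∀ i, v i = 0 ↔ i ∈ s} :=
    Equiv.subtypeEquivRight (by
      intro v
      constructor
      · intro h i; rw [← h]; simp
      · intro h; ext i; simp [h i])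
  have e2 : {v : α → Fin n // ∀ i, v i = 0 ↔ i ∈ s}
      ≃ ({i : α // i ∉ s} → {x : Fin n // x ≠ 0}) :=
    { toFun := fun v i => ⟨v.1 i.1, fun h => i.2 ((v.2 i.1).mp h)⟩
      invFun := fun g => ⟨fun i => if h : i ∈ s then 0 else (g ⟨i, h⟩).1, by
        intro i
        by_cases h : i ∈ s
        · simp [h]
        · simp [h, (g ⟨i, h⟩).2]⟩
      left_inv := fun v => by
        apply Subtype.ext
        funext i
        by_cases h : i ∈ s
        · simp [h, (v.2 i).mpr h]
        · simp [h]
      right_inv := fun g => by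
        funext i
        apply Subtype.ext
        simp [i.2] }
  rw [Fintype.card_congr (e1.trans e2), Fintype.card_fun]
  congr 1
  · have : Fintype.card {x : Fin n // x ≠ 0} = n - 1 := by
      rw [Fintype.card_subtype_compl, Fintype.card_subtype_eq, Fintype.card_fin]
    exact this
  · rw [Fintype.card_subtype_compl, Fintype.card_coe]

lemma zcount (α : Type*) [Fintype α] [DecidableEq α] (j : ℕ) :
    (univ.filter (fun v : α → Fin n =>
      (univ.filter (fun i => v i = 0)).card = j)).card
    = (Fintype.card α).choose j * (n - 1) ^ (Fintype.card α - j) := by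
  rw [Finset.card_eq_sum_card_fiberwise
    (f := fun v : α → Fin n => univ.filter (fun i => v i = 0))
    (t := Finset.univ.powersetCard j)
    (fun v hv => by
      simp only [mem_coe, mem_filter] at hv
      exact Finset.mem_coe.mpr (Finset.mem_powersetCard.mpr ⟨Finset.subset_univ _, hv.2⟩))]
  have key : ∀ s ∈ Finset.univ.powersetCard j,
      ((univ.filter (fun v : α → Fin n =>
        (univ.filter (fun i => v i = 0)).card = j)).filter
        (fun v => univ.filter (fun i => v i = 0) = s)).card
      = (n - 1) ^ (Fintype.card α - j) := by
    intro s hs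
    have hcard : s.card = j := (Finset.mem_powersetCard.mp hs).2
    rw [Finset.filter_filter]
    have : (univ.filter (fun v : α → Fin n =>
        (univ.filter (fun i => v i = 0)).card = j ∧ univ.filter (fun i => v i = 0) = s))
        = univ.filter (fun v : α → Fin n => univ.filter (fun i => v i = 0) = s) := by
      apply Finset.filter_congr
      intro v _
      constructor
      · exact fun h => h.2
      · intro h; exact ⟨by rw [h, hcard], h⟩
    rw [this, fiber_card, hcard]
  rw [Finset.sum_congr rfl key, Finset.sum_const, Finset.card_powersetCard, Finset.card_univ,
    smul_eq_mul]


def ext2 {k : ℕ} (c₁ c₂ : Fin k) (x y : Fin n)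
    (w : {i : Fin k // i ≠ c₁ ∧ i ≠ c₂} → Fin n) : Fin k → Fin n :=
  fun i => if h₁ : i = c₁ then x else if h₂ : i = c₂ then y else w ⟨i, h₁, h₂⟩

lemma zc_ext2 {k : ℕ} (c₁ c₂ : Fin k) (hne : c₁ ≠ c₂) (x y : Fin n)
    (w : {i : Fin k // i ≠ c₁ ∧ i ≠ c₂} → Fin n) :
    (univ.filter (fun i => ext2 c₁ c₂ x y w i = 0)).card
      = (univ.filter (fun i => w i = 0)).card
        + ((if x = 0 then 1 else 0) + (if y = 0 then 1 else 0)) := by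
  rw [Finset.card_filter, Finset.card_filter]
  rw [← Finset.add_sum_erase _ _ (Finset.mem_univ c₁)]
  rw [← Finset.add_sum_erase _ _ (Finset.mem_erase.mpr ⟨hne.symm, Finset.mem_univ c₂⟩)]
  have h1 : ext2 c₁ c₂ x y w c₁ = x := by simp [ext2]
  have h2 : ext2 c₁ c₂ x y w c₂ = y := by simp [ext2, hne.symm]
  have h3 : (∑ i ∈ (univ.erase c₁).erase c₂,
      (if ext2 c₁ c₂ x y w i = 0 then 1 else 0))
      = ∑ i : {i : Fin k // i ≠ c₁ ∧ i ≠ c₂}, (if w i = 0 then 1 else 0) := by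
    rw [Finset.sum_subtype (p := fun i : Fin k => i ≠ c₁ ∧ i ≠ c₂) _
      (by intro i; simp [Finset.mem_erase]; tauto)
      (f := fun i => if ext2 c₁ c₂ x y w i = 0 then (1 : ℕ) else 0)]
    apply Finset.sum_congr rfl
    intro i _
    congr 1
    simp only [ext2, dif_neg i.2.1, dif_neg i.2.2]
  rw [h1, h2, h3]
  ring

lemma paircount {k : ℕ} (c₁ c₂ : Fin k) (hne : c₁ ≠ c₂) (x y : Fin n) (t : ℕ) :
    (univ.filter (fun v : Fin k → Fin n =>
       v c₁ = x ∧ v c₂ = y ∧ (univ.filter (fun i => v i = 0)).card = t)).card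
    = if ((if x = 0 then 1 else 0) + (if y = 0 then 1 else 0) : ℕ) ≤ t then
        (k - 2).choose (t - ((if x = 0 then 1 else 0) + (if y = 0 then 1 else 0)))
          * (n - 1) ^ ((k - 2) - (t - ((if x = 0 then 1 else 0) + (if y = 0 then 1 else 0))))
      else 0 := by
  set e : ℕ := (if x = 0 then 1 else 0) + (if y = 0 then 1 else 0) with he
  have hcardα : Fintype.card {i : Fin k // i ≠ c₁ ∧ i ≠ c₂} = k - 2 := by
    rw [Fintype.card_subtype]
    have : univ.filter (fun i : Fin k => i ≠ c₁ ∧ i ≠ c₂) = univ \ {c₁, c₂} := by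
      ext i; simp
    rw [this, Finset.card_sdiff_of_subset (Finset.subset_univ _), Finset.card_univ, Fintype.card_fin,
      Finset.card_pair hne]
  rw [← Fintype.card_subtype]
  have E : {v : Fin k → Fin n // v c₁ = x ∧ v c₂ = y
        ∧ (univ.filter (fun i => v i = 0)).card = t}
      ≃ {w : {i : Fin k // i ≠ c₁ ∧ i ≠ c₂} → Fin n //
          (univ.filter (fun i => w i = 0)).card + e = t} :=
    { toFun := fun v => ⟨fun i => v.1 i.1, by
        have hv : ext2 c₁ c₂ x y (fun i => v.1 i.1) = v.1 := by
          funext i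
          by_cases h₁ : i = c₁
          · subst h₁; simp [ext2, v.2.1]
          · by_cases h₂ : i = c₂
            · subst h₂; simp [ext2, h₁, v.2.2.1]
            · simp [ext2, h₁, h₂]
        have := zc_ext2 c₁ c₂ hne x y (fun i => v.1 i.1)
        rw [hv, v.2.2.2] at this
        beta_reduce at this ⊢
        omega⟩
      invFun := fun w => ⟨ext2 c₁ c₂ x y w.1, by simp [ext2], by simp [ext2, hne.symm], by
        rw [zc_ext2 c₁ c₂ hne x y w.1, ← he, w.2]⟩
      left_inv := fun v => by
        apply Subtype.ext
        funext i
        by_cases h₁ : i = c₁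
        · subst h₁; simp [ext2, v.2.1]
        · by_cases h₂ : i = c₂
          · subst h₂; simp [ext2, h₁, v.2.2.1]
          · simp [ext2, h₁, h₂]
      right_inv := fun w => by
        apply Subtype.ext
        funext i
        simp [ext2, i.2.1, i.2.2] }
  rw [Fintype.card_congr E]
  by_cases h : e ≤ t
  · rw [if_pos h]
    have E2 : {w : {i : Fin k // i ≠ c₁ ∧ i ≠ c₂} → Fin n //
          (univ.filter (fun i => w i = 0)).card + e = t}
        ≃ {w : {i : Fin k // i ≠ c₁ ∧ i ≠ c₂} → Fin n //
          (univ.filter (fun i => w i = 0)).card = t - e} :=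
      Equiv.subtypeEquivRight (fun w => by omega)
    rw [Fintype.card_congr E2, Fintype.card_subtype, zcount, hcardα]
  · rw [if_neg h]
    rw [Fintype.card_eq_zero_iff]
    exact ⟨fun w => absurd w.2 (by omega)⟩


lemma transfer {k T m : ℕ} (S : Finset (Fin k → Fin n)) (hT : S.card + m = T) :
    ∃ A : Fin T → Fin k → Fin n, ∀ (P : (Fin k → Fin n) → Prop) (_ : DecidablePred P),
      (univ.filter (fun i => P (A i))).card
        = (S.filter P).card + if P (fun _ => 0) then m else 0 := by
  classical
  have hc : Fintype.card (↥S ⊕ Fin m) = T := by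
    rw [Fintype.card_sum, Fintype.card_coe, Fintype.card_fin, hT]
  let e : (↥S ⊕ Fin m) ≃ Fin T := Fintype.equivFinOfCardEq hc
  let g : (↥S ⊕ Fin m) → (Fin k → Fin n) := Sum.elim Subtype.val (fun _ _ => 0)
  refine ⟨g ∘ e.symm, ?_⟩
  intro P hP
  have h1 : (univ.filter (fun i : Fin T => P ((g ∘ e.symm) i))).card
      = Fintype.card {i : Fin T // P (g (e.symm i))} := by
    rw [Fintype.card_subtype]; rfl
  rw [h1, Fintype.card_congr (e.symm.subtypeEquiv (p := fun i => P (g (e.symm i))) (q := fun s => P (g s)) (fun i => Iff.rfl)),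
    Fintype.card_congr (Equiv.subtypeSum (p := fun s => P (g s))),
    Fintype.card_sum]
  congr 1
  · simp only [g, Sum.elim_inl]
    erw [Fintype.card_congr (Equiv.subtypeSubtypeEquivSubtypeInter (· ∈ S) P),
      Fintype.card_subtype]
    congr 1
    ext v
    simp [and_comm]
  · simp only [g, Sum.elim_inr]
    by_cases hz : P (fun _ => 0)
    · rw [if_pos hz]; erw [Fintype.card_subtype]
      rw [Finset.filter_true_of_mem (fun _ _ => hz), Finset.card_univ, Fintype.card_fin]
    · rw [if_neg hz]; erw [Fintype.card_subtype]
      rw [Finset.filter_false_of_mem (fun _ _ => hz), Finset.card_empty]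


theorem stmt11 (k n : ℕ) [NeZero n] (hk : 2 ≤ k) (hn : 2 ≤ n) (hdvd : n ∣ k - 1)
    (ha : 1 ≤ (k - 1) / n) (hkn : n ^ 2 ≤ k * (n - 1) + 1) :
    ∃ A : Fin ((Nat.choose (k - 2) ((k - 1) / n - 1) * (n - 1) ^ (k - (k - 1) / n - 1)) * n ^ 2)
          → Fin k → Fin n,
      IsOA (Nat.choose (k - 2) ((k - 1) / n - 1) * (n - 1) ^ (k - (k - 1) / n - 1)) k n A ∧
      (Finset.univ.filter (fun i => A i = fun _ => (0 : Fin n))).card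
        = Nat.choose (k - 2) ((k - 1) / n - 1) * (n - 1) ^ (k - (k - 1) / n - 1) * n ^ 2
            / (k * (n - 1) + 1) := by
  classical
  set a := (k - 1) / n with hadef
  have han : n * a = k - 1 := Nat.mul_div_cancel' hdvd
  have h2a : 2 * a ≤ n * a := Nat.mul_le_mul_right a hn
  have h21 : 2 * 1 ≤ n * a := Nat.mul_le_mul hn ha
  have hka : a + 2 ≤ k := by omega
  have hk3 : 3 ≤ k := by omega
  have hak1 : a ≤ k - 1 := by omega
  set lam := Nat.choose (k - 2) (a - 1) * (n - 1) ^ (k - a - 1) with hlam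
  set c00 := if 2 ≤ a then Nat.choose (k - 2) (a - 2) * (n - 1) ^ (k - 2 - (a - 2)) else 0
    with hc00
  set m := lam - c00 with hm
  clear_value a
  clear_value lam
  clear_value c00
  clear_value m
  have hzk : (1 : ℤ) ≤ k := by omega
  have hzint : (n : ℤ) * a = (k : ℤ) - 1 := by
    have := han; zify at this; omega
  -- arithmetic facts
  have hpow : (n - 1) ^ (k - a) = (n - 1) ^ (k - a - 1) * (n - 1) := by
    rw [← pow_succ]; congr 1; omega
  have hE0 : Nat.choose (k - 2) a * (n - 1) ^ (k - 2 - a) = lam := by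
    have hch := Nat.choose_succ_right_eq (k - 2) (a - 1)
    rw [show a - 1 + 1 = a by omega, show k - 2 - (a - 1) = k - 1 - a by omega] at hch
    have heq0 : k - 1 - a = a * (n - 1) := by
      zify [show 1 ≤ n by omega, hak1, show (1:ℕ) ≤ k by omega]
      linear_combination -hzint
    rw [heq0] at hch
    have hch' : Nat.choose (k - 2) a = Nat.choose (k - 2) (a - 1) * (n - 1) := by
      apply Nat.eq_of_mul_eq_mul_right (show 0 < a by omega)
      rw [hch]; ring
    rw [hch', hlam, show k - a - 1 = (k - 2 - a) + 1 by omega, pow_succ]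
    ring
  have hE1 : Nat.choose (k - 2) (a - 1) * (n - 1) ^ (k - 2 - (a - 1)) = lam := by
    rw [hlam]; congr 2; omega
  have hF1 : c00 ≤ lam ∧ m * (k - a) = lam * n := by
    rcases Nat.lt_or_ge a 2 with h2 | h2
    · have ha1 : a = 1 := by omega
      have hc0 : c00 = 0 := by rw [hc00, if_neg (by omega)]
      have htmp := han
      rw [ha1, Nat.mul_one] at htmp
      have hkn1 : k - a = n := by omega
      constructor
      · omega
      · rw [hm, hc0, Nat.sub_zero, hkn1]
    · have hc0 : c00 = Nat.choose (k - 2) (a - 2) * (n - 1) ^ (k - a) := by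
        rw [hc00, if_pos h2]; congr 2; omega
      have hch := Nat.choose_succ_right_eq (k - 2) (a - 2)
      rw [show a - 2 + 1 = a - 1 by omega, show k - 2 - (a - 2) = k - a by omega] at hch
      have heq : (a - 1) * (n - 1) + n = k - a := by
        zify [show 1 ≤ n by omega, show 1 ≤ a by omega, show a ≤ k by omega]
        linear_combination hzint
      have hA : c00 * (k - a) = lam * ((a - 1) * (n - 1)) := by
        calc c00 * (k - a) = Nat.choose (k - 2) (a - 2) * (k - a) * (n - 1) ^ (k - a) := by
              rw [hc0]; ring
          _ = Nat.choose (k - 2) (a - 1) * (a - 1) * (n - 1) ^ (k - a) := by rw [← hch]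
          _ = Nat.choose (k - 2) (a - 1) * (a - 1) * ((n - 1) ^ (k - a - 1) * (n - 1)) := by
              rw [hpow]
          _ = lam * ((a - 1) * (n - 1)) := by rw [hlam]; ring
      have hB : lam * (k - a) = lam * ((a - 1) * (n - 1)) + lam * n := by
        rw [← heq, Nat.mul_add]
      have hle : c00 * (k - a) ≤ lam * (k - a) := by omega
      have hc00le : c00 ≤ lam := Nat.le_of_mul_le_mul_right hle (by omega)
      refine ⟨hc00le, ?_⟩
      rw [hm, Nat.sub_mul]
      omega
  obtain ⟨hF1a, hF2⟩ := hF1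
  -- the set S of tuples with exactly a zeros
  set S := Finset.univ.filter
    (fun v : Fin k → Fin n => (Finset.univ.filter (fun i => v i = 0)).card = a) with hS
  clear_value S
  have hpairS : ∀ c₁ c₂ : Fin k, c₁ ≠ c₂ → ∀ x y : Fin n,
      (S.filter (fun v => v c₁ = x ∧ v c₂ = y)).card
        = if x = 0 ∧ y = 0 then c00 else lam := by
    intro c₁ c₂ hne x y
    have h1 : S.filter (fun v => v c₁ = x ∧ v c₂ = y)
        = Finset.univ.filter (fun v : Fin k → Fin n =>
            v c₁ = x ∧ v c₂ = y ∧ (Finset.univ.filter (fun i => v i = 0)).card = a) := by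
      ext v
      simp only [hS, Finset.mem_filter, Finset.mem_univ, true_and]
      tauto
    rw [h1, paircount c₁ c₂ hne x y a]
    by_cases hx : x = 0 <;> by_cases hy : y = 0
    · have hev : ((if x = 0 then 1 else 0) + (if y = 0 then 1 else 0) : ℕ) = 2 := by
        rw [if_pos hx, if_pos hy]
      rw [hev, if_pos (And.intro hx hy), hc00]
    · have hev : ((if x = 0 then 1 else 0) + (if y = 0 then 1 else 0) : ℕ) = 1 := by
        rw [if_pos hx, if_neg hy]
      rw [hev, if_pos (show 1 ≤ a by omega), if_neg (fun hc => hy hc.2)]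
      exact hE1
    · have hev : ((if x = 0 then 1 else 0) + (if y = 0 then 1 else 0) : ℕ) = 1 := by
        rw [if_neg hx, if_pos hy]
      rw [hev, if_pos (show 1 ≤ a by omega), if_neg (fun hc => hx hc.1)]
      exact hE1
    · have hev : ((if x = 0 then 1 else 0) + (if y = 0 then 1 else 0) : ℕ) = 0 := by
        rw [if_neg hx, if_neg hy]
      rw [hev, if_pos (Nat.zero_le a), if_neg (fun hc => hx hc.1), Nat.sub_zero]
      exact hE0
  -- total count
  have hcardS : S.card + m = lam * n ^ 2 := by
    obtain ⟨c₁, c₂, hne⟩ : ∃ c₁ c₂ : Fin k, c₁ ≠ c₂ :=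
      ⟨⟨0, by omega⟩, ⟨1, by omega⟩, by simp [Fin.ext_iff]⟩
    have hfw : S.card = ∑ p : Fin n × Fin n,
        (S.filter (fun v => (v c₁, v c₂) = p)).card :=
      Finset.card_eq_sum_card_fiberwise (fun v _ => Finset.mem_univ _)
    have hfib : ∀ p : Fin n × Fin n, (S.filter (fun v => (v c₁, v c₂) = p)).card
        = if p.1 = 0 ∧ p.2 = 0 then c00 else lam := by
      intro p
      rw [show S.filter (fun v => (v c₁, v c₂) = p)
          = S.filter (fun v => v c₁ = p.1 ∧ v c₂ = p.2) by
        apply Finset.filter_congr; intro v _; rw [Prod.ext_iff]]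
      exact hpairS c₁ c₂ hne p.1 p.2
    rw [hfw, Finset.sum_congr rfl (fun p _ => hfib p)]
    rw [← Finset.sum_erase_add _ _ (Finset.mem_univ ((0 : Fin n), (0 : Fin n)))]
    have hz : ∀ p ∈ (Finset.univ : Finset (Fin n × Fin n)).erase (0, 0),
        (if p.1 = 0 ∧ p.2 = 0 then c00 else lam) = lam := by
      intro p hp
      rw [if_neg]
      intro h
      exact (Finset.mem_erase.mp hp).1 (Prod.ext_iff.mpr ⟨h.1, h.2⟩)
    rw [Finset.sum_congr rfl hz, Finset.sum_const, if_pos ⟨rfl, rfl⟩,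
      Finset.card_erase_of_mem (Finset.mem_univ _), Finset.card_univ, Fintype.card_prod,
      Fintype.card_fin, smul_eq_mul]
    clear hz hfib hfw hpairS
    have hnn : n * n = n ^ 2 := by ring
    rw [hnn]
    have h1 : (n ^ 2 - 1) * lam + lam = n ^ 2 * lam := by
      rw [Nat.sub_one_mul]
      have : lam ≤ n ^ 2 * lam := Nat.le_mul_of_pos_left lam (by positivity)
      omega
    have h2 : n ^ 2 * lam = lam * n ^ 2 := Nat.mul_comm _ _
    omega
  obtain ⟨A, hA⟩ := transfer S hcardS
  refine ⟨A, ?_, ?_⟩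
  · intro c₁ c₂ hne x y
    have h := hA (fun v => v c₁ = x ∧ v c₂ = y) inferInstance
    rw [hpairS c₁ c₂ hne x y] at h
    by_cases hxy : x = 0 ∧ y = 0
    · rw [if_pos hxy, if_pos ⟨hxy.1.symm, hxy.2.symm⟩,
        show c00 + m = lam by omega] at h
      exact h
    · rw [if_neg hxy, if_neg (by
        intro hcon
        exact hxy ⟨hcon.1.symm, hcon.2.symm⟩), Nat.add_zero] at h
      exact h
  · have h := hA (fun v => v = fun _ => 0) inferInstance
    rw [if_pos rfl] at h
    have hempty : S.filter (fun v => v = fun _ => (0 : Fin n)) = ∅ := by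
      rw [Finset.filter_eq_empty_iff]
      intro v hv hcon
      rw [hS, Finset.mem_filter] at hv
      rw [hcon] at hv
      have hall : (Finset.univ.filter (fun i : Fin k => (fun _ => (0 : Fin n)) i = 0))
          = Finset.univ := Finset.filter_true_of_mem (fun _ _ => rfl)
      rw [hall, Finset.card_univ, Fintype.card_fin] at hv
      omega
    rw [hempty, Finset.card_empty, Nat.zero_add] at h
    have hnk : k * (n - 1) + 1 = n * (k - a) := by
      have hs1 : n * k = n * (k - a) + n * a := by
        rw [← Nat.mul_add]; congr 1; omega
      have hs2 : k * n = k * (n - 1) + k := by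
        conv_lhs => rw [show n = (n - 1) + 1 by omega]
        rw [Nat.mul_add, Nat.mul_one]
      have hc : n * k = k * n := Nat.mul_comm _ _
      omega
    have hF4 : lam * n ^ 2 = m * (k * (n - 1) + 1) := by
      calc lam * n ^ 2 = lam * n * n := by ring
        _ = m * (k - a) * n := by rw [hF2]
        _ = m * (n * (k - a)) := by ring
        _ = m * (k * (n - 1) + 1) := by rw [hnk]
    rw [Nat.div_eq_of_eq_mul_left (by omega) hF4]
    exact h
end

section
/- Let A be an OA_λ(k,n) (k ≥ 2, n ≥ 2, λ ≥ 1) containing a row 0 0 ⋯ 0 repeated m times, and let α be a positive integer. Then m·(k(k−1) − 2αk + α² + α) ≤ λ·(k(k−1) − 2αkn + (α²+α)n²), with equality if and only if every row other than the m repeated rows contains either α or α+1 occurrences of the symbol 0. -/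
theorem stmt13 (k n lam m α : ℕ) [NeZero n] (hk : 2 ≤ k) (hn : 2 ≤ n)
    (hlam : 1 ≤ lam) (hα : 0 < α)
    (A : Fin (lam * n ^ 2) → Fin k → Fin n) (hA : IsOA lam k n A)
    (hm : (Finset.univ.filter (fun i => A i = fun _ => (0 : Fin n))).card = m) :
    (m : ℤ) * ((k : ℤ) * ((k : ℤ) - 1) - 2 * α * k + (α : ℤ) ^ 2 + α)
      ≤ (lam : ℤ) * ((k : ℤ) * ((k : ℤ) - 1) - 2 * α * k * n + ((α : ℤ) ^ 2 + α) * n ^ 2) ∧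
    ((m : ℤ) * ((k : ℤ) * ((k : ℤ) - 1) - 2 * α * k + (α : ℤ) ^ 2 + α)
        = (lam : ℤ) * ((k : ℤ) * ((k : ℤ) - 1) - 2 * α * k * n + ((α : ℤ) ^ 2 + α) * n ^ 2) ↔
      ∀ i, A i ≠ (fun _ => (0 : Fin n)) →
        (Finset.univ.filter (fun c => A i c = 0)).card = α ∨
        (Finset.univ.filter (fun c => A i c = 0)).card = α + 1) := by
  classical
  set f : Fin (lam * n ^ 2) → ℕ :=
    fun i => (Finset.univ.filter (fun c => A i c = 0)).card with hfdef
  -- column count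
  have hcol : ∀ c : Fin k,
      (Finset.univ.filter (fun i => A i c = 0)).card = lam * n := by
    intro c
    obtain ⟨c₂, hc₂⟩ := Fintype.exists_ne_of_one_lt_card (by simpa using (show 1 < k from hk)) c
    have hset : (Finset.univ.filter (fun i => A i c = 0)) =
        Finset.univ.biUnion (fun y : Fin n =>
          Finset.univ.filter (fun i => A i c = 0 ∧ A i c₂ = y)) := by
      ext i
      simp only [Finset.mem_filter, Finset.mem_univ, true_and, Finset.mem_biUnion]
      constructor
      · exact fun h => ⟨A i c₂, h, rfl⟩
      · rintro ⟨y, h, -⟩; exact h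
    rw [hset, Finset.card_biUnion]
    · have : ∀ y : Fin n,
          (Finset.univ.filter (fun i => A i c = 0 ∧ A i c₂ = y)).card = lam :=
        fun y => hA c c₂ hc₂.symm 0 y
      simp [this, mul_comm]
    · intro y₁ _ y₂ _ hne
      refine Finset.disjoint_left.mpr fun i h1 h2 => ?_
      simp only [Finset.mem_filter] at h1 h2
      exact hne (h1.2.2 ▸ h2.2.2 ▸ rfl)
  -- sum of f over all rows
  have hfcard : ∀ i, f i = ∑ c : Fin k, if A i c = 0 then 1 else 0 := by
    intro i; rw [hfdef]; exact Finset.card_filter _ _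
  have hsum1 : ∑ i, f i = k * (lam * n) := by
    calc ∑ i, f i = ∑ i, ∑ c : Fin k, if A i c = 0 then 1 else 0 :=
          Finset.sum_congr rfl fun i _ => hfcard i
      _ = ∑ c : Fin k, ∑ i, if A i c = 0 then 1 else 0 := Finset.sum_comm
      _ = ∑ c : Fin k, (lam * n) := by
          refine Finset.sum_congr rfl fun c _ => ?_
          rw [← Finset.card_filter]; exact hcol c
      _ = k * (lam * n) := by simp [mul_comm]
  -- sum of f^2 over all rows
  have hboth : ∀ c₁ c₂ : Fin k,
      (Finset.univ.filter (fun i => A i c₁ = 0 ∧ A i c₂ = 0)).card =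
        if c₁ = c₂ then lam * n else lam := by
    intro c₁ c₂
    by_cases h : c₁ = c₂
    · subst h; simp only [if_true, and_self]; exact hcol c₁
    · rw [if_neg h]; exact hA c₁ c₂ h 0 0
  have hsum2 : ∑ i, f i * f i = k * (lam * n) + k * (k - 1) * lam := by
    have step1 : ∀ i, f i * f i =
        ∑ c₁ : Fin k, ∑ c₂ : Fin k,
          if A i c₁ = 0 ∧ A i c₂ = 0 then 1 else 0 := by
      intro i
      rw [hfcard i, Finset.sum_mul_sum]
      refine Finset.sum_congr rfl fun c₁ _ => Finset.sum_congr rfl fun c₂ _ => ?_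
      by_cases h1 : A i c₁ = 0 <;> by_cases h2 : A i c₂ = 0 <;> simp [h1, h2]
    calc ∑ i, f i * f i
        = ∑ i, ∑ c₁ : Fin k, ∑ c₂ : Fin k,
            if A i c₁ = 0 ∧ A i c₂ = 0 then 1 else 0 :=
          Finset.sum_congr rfl fun i _ => step1 i
      _ = ∑ c₁ : Fin k, ∑ i, ∑ c₂ : Fin k,
            if A i c₁ = 0 ∧ A i c₂ = 0 then 1 else 0 := Finset.sum_comm
      _ = ∑ c₁ : Fin k, ∑ c₂ : Fin k, ∑ i,
            if A i c₁ = 0 ∧ A i c₂ = 0 then 1 else 0 :=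
          Finset.sum_congr rfl fun c₁ _ => Finset.sum_comm
      _ = ∑ c₁ : Fin k, ∑ c₂ : Fin k, (if c₁ = c₂ then lam * n else lam) := by
          refine Finset.sum_congr rfl fun c₁ _ => Finset.sum_congr rfl fun c₂ _ => ?_
          rw [← Finset.card_filter]; exact hboth c₁ c₂
      _ = ∑ c₁ : Fin k, (lam * n + (k - 1) * lam) := by
          refine Finset.sum_congr rfl fun c₁ _ => ?_
          rw [← Finset.add_sum_erase _ _ (Finset.mem_univ c₁), if_pos rfl]
          congr 1
          rw [Finset.sum_congr rfl (fun c₂ hc₂ => by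
            rw [if_neg (Ne.symm (Finset.ne_of_mem_erase hc₂))]),
            Finset.sum_const, Finset.card_erase_of_mem (Finset.mem_univ c₁)]
          simp [mul_comm]
      _ = k * (lam * n) + k * (k - 1) * lam := by
          rw [Finset.sum_const]; simp [Finset.card_univ, mul_add, mul_assoc]
  -- the sets of rows
  set Z : Finset (Fin (lam * n ^ 2)) :=
    Finset.univ.filter (fun i => A i = fun _ => (0 : Fin n)) with hZ
  set S : Finset (Fin (lam * n ^ 2)) :=
    Finset.univ.filter (fun i => ¬ (A i = fun _ => (0 : Fin n))) with hS
  have hfZ : ∀ i ∈ Z, f i = k := by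
    intro i hi
    rw [hZ, Finset.mem_filter] at hi
    have : ∀ c, A i c = 0 := fun c => congrFun hi.2 c
    rw [hfdef]
    simp only []
    rw [Finset.filter_true_of_mem (fun c _ => this c), Finset.card_univ,
      Fintype.card_fin]
  -- cardinalities and split sums (in ℤ)
  have hsplit : ∀ g : Fin (lam * n ^ 2) → ℤ,
      ∑ i ∈ S, g i = ∑ i, g i - ∑ i ∈ Z, g i := by
    intro g
    have := Finset.sum_filter_add_sum_filter_not Finset.univ
      (fun i => A i = fun _ => (0 : Fin n)) g
    rw [hS, hZ]; linarith [this]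
  have hZcard : (Z.card : ℤ) = m := by rw [hZ, hm]
  have hZsum1 : ∑ i ∈ Z, (f i : ℤ) = m * k := by
    rw [Finset.sum_congr rfl (fun i hi => by rw [hfZ i hi]), Finset.sum_const,
      ← hm, hZ]
    push_cast; ring
  have hZsum2 : ∑ i ∈ Z, (f i : ℤ) * (f i : ℤ) = m * (k * k) := by
    rw [Finset.sum_congr rfl (fun i hi => by rw [hfZ i hi]), Finset.sum_const,
      ← hm, hZ]
    push_cast; ring
  have hUsum1 : ∑ i, (f i : ℤ) = k * (lam * n) := by
    rw [← Nat.cast_sum, hsum1]; push_cast; ring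
  have hUsum2 : ∑ i, (f i : ℤ) * (f i : ℤ) = k * (lam * n) + k * (k - 1) * lam := by
    have : ∑ i, (f i : ℤ) * (f i : ℤ) = ((∑ i, f i * f i : ℕ) : ℤ) := by
      push_cast; rfl
    rw [this, hsum2]
    have h1 : (1 : ℕ) ≤ k := le_trans (by norm_num) hk
    push_cast [Nat.cast_sub h1]; ring
  have hScard : (S.card : ℤ) = lam * n ^ 2 - m := by
    have := Finset.card_filter_add_card_filter_not (s := Finset.univ)
      (p := fun i => A i = fun _ => (0 : Fin n))
    rw [← hZ, ← hS, Finset.card_univ, Fintype.card_fin] at this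
    have h2 : (Z.card : ℤ) + (S.card : ℤ) = (lam : ℤ) * n ^ 2 := by
      exact_mod_cast congrArg (fun x : ℕ => (x : ℤ)) this
    linarith [hZcard, h2]
  -- the key sum T
  set T : ℤ := ∑ i ∈ S, ((f i : ℤ) - α) * ((f i : ℤ) - α - 1) with hT
  have key : ∀ x : ℤ, 0 ≤ (x - α) * (x - α - 1) := by
    intro x
    rcases le_or_gt x α with h | h
    · have h1 : (α : ℤ) - x ≥ 0 := by linarith
      have h2 : (α : ℤ) + 1 - x ≥ 0 := by linarith
      nlinarith
    · have h1 : (α : ℤ) + 1 ≤ x := h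
      nlinarith
  have hTexpand : T = (∑ i ∈ S, (f i : ℤ) * (f i : ℤ))
      - (2 * α + 1) * (∑ i ∈ S, (f i : ℤ)) + (α ^ 2 + α) * S.card := by
    have hterm : ∀ i, ((f i : ℤ) - α) * ((f i : ℤ) - α - 1) =
        (f i : ℤ) * (f i : ℤ) - (2 * α + 1) * (f i : ℤ) + (α ^ 2 + α) :=
      fun i => by ring
    rw [hT, Finset.sum_congr rfl fun i _ => hterm i]
    rw [Finset.sum_add_distrib, Finset.sum_sub_distrib, ← Finset.mul_sum,
      Finset.sum_const, nsmul_eq_mul]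
    ring
  have hSsum1 : ∑ i ∈ S, (f i : ℤ) = k * (lam * n) - m * k := by
    rw [hsplit, hUsum1, hZsum1]
  have hSsum2 : ∑ i ∈ S, (f i : ℤ) * (f i : ℤ)
      = k * (lam * n) + k * ((k : ℤ) - 1) * lam - m * (k * k) := by
    rw [hsplit, hUsum2, hZsum2]
  have hTval : T = (lam : ℤ) * ((k : ℤ) * ((k : ℤ) - 1) - 2 * α * k * n
        + ((α : ℤ) ^ 2 + α) * n ^ 2)
      - (m : ℤ) * ((k : ℤ) * ((k : ℤ) - 1) - 2 * α * k + (α : ℤ) ^ 2 + α) := by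
    rw [hTexpand, hSsum1, hSsum2, hScard]; ring
  have hTnonneg : 0 ≤ T := Finset.sum_nonneg fun i _ => key (f i)
  constructor
  · linarith
  · have hiff : ((m : ℤ) * ((k : ℤ) * ((k : ℤ) - 1) - 2 * α * k + (α : ℤ) ^ 2 + α)
        = (lam : ℤ) * ((k : ℤ) * ((k : ℤ) - 1) - 2 * α * k * n
          + ((α : ℤ) ^ 2 + α) * n ^ 2)) ↔ T = 0 :=
      ⟨fun h => by linarith, fun h => by linarith⟩
    rw [hiff, hT, Finset.sum_eq_zero_iff_of_nonneg (fun i _ => key (f i))]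
    constructor
    · intro h i hi
      have hiS : i ∈ S := by rw [hS, Finset.mem_filter]; exact ⟨Finset.mem_univ i, hi⟩
      have h0 := h i hiS
      have hfi : (Finset.univ.filter (fun c => A i c = 0)).card = f i := rfl
      rw [hfi]
      rcases mul_eq_zero.mp h0 with h' | h'
      · left; exact_mod_cast sub_eq_zero.mp h'
      · right
        have : (f i : ℤ) = α + 1 := by linarith [sub_eq_zero.mp (by linarith [h'] : (f i : ℤ) - α - 1 = 0)]
        exact_mod_cast this
    · intro h i hi
      rw [hS, Finset.mem_filter] at hi
      have hfi : (Finset.univ.filter (fun c => A i c = 0)).card = f i := rfl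
      rcases h i hi.2 with h' | h' <;> rw [hfi] at h'
      · rw [h']; ring
      · rw [h']; push_cast; ring
end

section
/- Let k, n, λ, s, m be positive integers with n ≥ 2. If k = sn and there is an OA_λ(k,n) containing a row repeated m times, then m ≤ λn²/(k(n−1)+n). -/
set_option maxRecDepth 8000
set_option maxHeartbeats 1000000


theorem stmt14 (k n lam s m : ℕ) (hn : 2 ≤ n) (hs : 0 < s) (hlam : 0 < lam)
    (hm : 0 < m) (hks : k = s * n)
    (A : Fin (lam * n ^ 2) → Fin k → Fin n) (hA : IsOA lam k n A)
    (r : Fin k → Fin n)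
    (hr : (Finset.univ.filter (fun i => A i = r)).card = m) :
    m * (k * (n - 1) + n) ≤ lam * n ^ 2 := by
  have hk2 : 2 ≤ k := by
    calc 2 = 1 * 2 := by ring
    _ ≤ s * n := Nat.mul_le_mul hs hn
    _ = k := hks.symm
  -- column counts
  have hcol : ∀ (c : Fin k) (x : Fin n),
      (Finset.univ.filter (fun i => A i c = x)).card = lam * n := by
    intro c x
    have hk1 : 1 < Fintype.card (Fin k) := by rw [Fintype.card_fin]; omega
    obtain ⟨c', hc'⟩ := Fintype.exists_ne_of_one_lt_card hk1 c
    rw [Finset.card_eq_sum_card_fiberwise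
      (f := fun i => A i c') (t := (Finset.univ : Finset (Fin n)))
      (fun i _ => Finset.mem_univ _)]
    have h1 : ∀ y : Fin n, ((Finset.univ.filter (fun i => A i c = x)).filter
        (fun i => A i c' = y)).card = lam := by
      intro y
      rw [Finset.filter_filter]
      exact hA c c' (Ne.symm hc') x y
    simp only [h1, Finset.sum_const, Finset.card_univ, Fintype.card_fin, smul_eq_mul]
    ring
  set d : Fin (lam * n ^ 2) → ℕ :=
    fun i => (Finset.univ.filter (fun c => A i c = r c)).card with hd
  have hdsum : ∀ i, d i = ∑ c : Fin k, if A i c = r c then 1 else 0 := by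
    intro i
    show (Finset.univ.filter (fun c => A i c = r c)).card = _
    rw [Finset.card_filter]
  have hsum1 : ∑ i, d i = k * (lam * n) := by
    simp_rw [hdsum]
    rw [Finset.sum_comm]
    have h2 : ∀ c : Fin k, (∑ i, if A i c = r c then 1 else 0) = lam * n := by
      intro c
      rw [← hcol c (r c), Finset.card_filter]
    simp only [h2, Finset.sum_const, Finset.card_univ, Fintype.card_fin, smul_eq_mul]
  have hpair : ∀ c₁ c₂ : Fin k,
      (Finset.univ.filter (fun i => A i c₁ = r c₁ ∧ A i c₂ = r c₂)).card
        = if c₁ = c₂ then lam * n else lam := by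
    intro c₁ c₂
    split_ifs with h
    · subst h
      simp only [and_self]
      exact hcol c₁ (r c₁)
    · exact hA c₁ c₂ h (r c₁) (r c₂)
  -- second moment, over ℤ
  have hsum2 : ∑ i, ((d i : ℤ)) ^ 2
      = (k : ℤ) * (lam * n) + k * ((k : ℤ) - 1) * lam := by
    have hdi : ∀ i, ((d i : ℤ)) ^ 2 =
        ∑ c₁ : Fin k, ∑ c₂ : Fin k,
          if A i c₁ = r c₁ ∧ A i c₂ = r c₂ then (1 : ℤ) else 0 := by
      intro i
      have : (d i : ℤ) = ∑ c : Fin k, if A i c = r c then (1 : ℤ) else 0 := by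
        rw [hdsum i]; push_cast; rfl
      rw [sq, this, Finset.sum_mul_sum]
      congr 1; ext c₁; congr 1; ext c₂
      by_cases h1 : A i c₁ = r c₁ <;> by_cases h2 : A i c₂ = r c₂ <;> simp [h1, h2]
    simp_rw [hdi]
    rw [Finset.sum_comm]
    have h3 : ∀ c₁ : Fin k, ∑ i, ∑ c₂ : Fin k,
        (if A i c₁ = r c₁ ∧ A i c₂ = r c₂ then (1 : ℤ) else 0)
        = ∑ c₂ : Fin k, ∑ i, (if A i c₁ = r c₁ ∧ A i c₂ = r c₂ then (1 : ℤ) else 0) :=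
      fun c₁ => Finset.sum_comm
    simp_rw [h3]
    have h4 : ∀ c₁ c₂ : Fin k,
        (∑ i, if A i c₁ = r c₁ ∧ A i c₂ = r c₂ then (1 : ℤ) else 0)
        = if c₁ = c₂ then (lam : ℤ) * n else (lam : ℤ) := by
      intro c₁ c₂
      have := hpair c₁ c₂
      rw [Finset.card_filter] at this
      have h5 : (∑ i, if A i c₁ = r c₁ ∧ A i c₂ = r c₂ then (1 : ℤ) else 0)
          = ((∑ i, if A i c₁ = r c₁ ∧ A i c₂ = r c₂ then (1 : ℕ) else 0 : ℕ) : ℤ) := by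
        push_cast; rfl
      rw [h5, this]
      split_ifs <;> push_cast <;> ring
    simp_rw [h4]
    have h6 : ∀ c₁ : Fin k, (∑ c₂ : Fin k, if c₁ = c₂ then (lam : ℤ) * n else (lam : ℤ))
        = (lam : ℤ) * n + ((k : ℤ) - 1) * lam := by
      intro c₁
      have : ∀ c₂ : Fin k, (if c₁ = c₂ then (lam : ℤ) * n else (lam : ℤ))
          = (lam : ℤ) + (if c₁ = c₂ then (lam : ℤ) * n - lam else 0) := by
        intro c₂; split_ifs <;> ring
      simp_rw [this]
      rw [Finset.sum_add_distrib, Finset.sum_ite_eq, Finset.sum_const]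
      simp only [Finset.mem_univ, if_true, Finset.card_univ, Fintype.card_fin, smul_eq_mul]
      ring
    simp_rw [h6]
    rw [Finset.sum_const]
    simp only [Finset.card_univ, Fintype.card_fin, smul_eq_mul]
    ring
  have hsum1' : ∑ i, ((d i : ℤ)) = (k : ℤ) * (lam * n) := by
    have : (∑ i, ((d i : ℤ))) = ((∑ i, d i : ℕ) : ℤ) := by push_cast; rfl
    rw [this, hsum1]; push_cast; ring
  -- rows equal to r
  set S := Finset.univ.filter (fun i => A i = r) with hS
  have hdS : ∀ i ∈ S, d i = k := by
    intro i hi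
    rw [hS, Finset.mem_filter] at hi
    have h9 : (Finset.univ.filter (fun c => A i c = r c)) = Finset.univ := by
      apply Finset.filter_true_of_mem
      intro c _
      rw [hi.2]
    show (Finset.univ.filter (fun c => A i c = r c)).card = k
    rw [h9, Finset.card_univ, Fintype.card_fin]
  -- key inequality
  set α : ℤ := (s : ℤ) - 1 with hα
  have hnn : ∀ z : ℤ, 0 ≤ (z - α) * (z - α - 1) := by
    intro z
    rcases (by omega : z - α ≤ 0 ∨ 1 ≤ z - α) with h | h
    · nlinarith
    · nlinarith
  have key : (m : ℤ) * ((k : ℤ) - α) * ((k : ℤ) - α - 1)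
      ≤ ∑ i, ((d i : ℤ) - α) * ((d i : ℤ) - α - 1) := by
    have h7 : ∑ i ∈ S, ((d i : ℤ) - α) * ((d i : ℤ) - α - 1)
        = (m : ℤ) * (((k : ℤ) - α) * ((k : ℤ) - α - 1)) := by
      rw [Finset.sum_congr rfl (fun i hi => by rw [hdS i hi]), Finset.sum_const, hr,
        nsmul_eq_mul]
    calc (m : ℤ) * ((k : ℤ) - α) * ((k : ℤ) - α - 1)
        = ∑ i ∈ S, ((d i : ℤ) - α) * ((d i : ℤ) - α - 1) := by rw [h7]; ring
      _ ≤ ∑ i, ((d i : ℤ) - α) * ((d i : ℤ) - α - 1) := by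
          apply Finset.sum_le_sum_of_subset_of_nonneg (Finset.subset_univ S)
          intro i _ _
          exact hnn _
  have expand : ∑ i, ((d i : ℤ) - α) * ((d i : ℤ) - α - 1)
      = (∑ i, ((d i : ℤ)) ^ 2) - (2 * α + 1) * (∑ i, ((d i : ℤ)))
        + ((lam : ℤ) * n ^ 2) * (α * (α + 1)) := by
    have : ∀ i : Fin (lam * n ^ 2), ((d i : ℤ) - α) * ((d i : ℤ) - α - 1)
        = (d i : ℤ) ^ 2 - (2 * α + 1) * (d i : ℤ) + α * (α + 1) := fun i => by ring
    simp_rw [this]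
    rw [Finset.sum_add_distrib, Finset.sum_sub_distrib, ← Finset.mul_sum, Finset.sum_const]
    simp only [Finset.card_univ, Fintype.card_fin, smul_eq_mul]
    push_cast
    ring
  rw [expand, hsum2, hsum1'] at key
  -- final arithmetic
  have hgoal : (m : ℤ) * ((k : ℤ) * ((n : ℤ) - 1) + n) ≤ (lam : ℤ) * n ^ 2 := by
    have hkz : (k : ℤ) = (s : ℤ) * n := by exact_mod_cast hks
    have hsz : (1 : ℤ) ≤ s := by exact_mod_cast hs
    have hnz : (2 : ℤ) ≤ n := by exact_mod_cast hn
    have hmz : (1 : ℤ) ≤ m := by exact_mod_cast hm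
    have hlz : (1 : ℤ) ≤ lam := by exact_mod_cast hlam
    rw [hkz] at key ⊢
    rw [hα] at key
    nlinarith [key, mul_pos (by linarith : (0:ℤ) < (s:ℤ)) (by linarith : (0:ℤ) < (n:ℤ) - 1),
      mul_nonneg (by linarith : (0:ℤ) ≤ (n:ℤ))
        (by linarith [key] : (0:ℤ) ≤ (lam:ℤ) * ((s:ℤ)*n) * n - (lam:ℤ)*((s:ℤ)*n)
          - (m:ℤ) * ((s:ℤ)*((n:ℤ)-1)) * ((s:ℤ)*((n:ℤ)-1)+1))]
  have h8 : ((m * (k * (n - 1) + n) : ℕ) : ℤ) ≤ ((lam * n ^ 2 : ℕ) : ℤ) := by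
    push_cast [Nat.cast_sub (by omega : 1 ≤ n)]
    convert hgoal using 2 <;> push_cast <;> ring
  exact_mod_cast h8
end

section
/- Suppose m = λn²/(k(n−1)+1) is a positive integer and s is a positive integer with s < (k(n−1)+1)² / ((n−1)(λn² + k(n−1)+1)). Then m = ⌊λn² / ((k−s)(n−1)+1)⌋. -/
theorem stmt16 (k n lam m s : ℕ) (hk : 2 ≤ k) (hn : 2 ≤ n) (hlam : 1 ≤ lam)
    (hm : 1 ≤ m) (hs : 1 ≤ s) (hsk : s < k)
    (heq : m * (k * (n - 1) + 1) = lam * n ^ 2)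
    (hbound : (s : ℚ) < ((k * (n - 1) + 1 : ℕ) : ℚ) ^ 2
        / (((n - 1) * (lam * n ^ 2 + k * (n - 1) + 1) : ℕ) : ℚ)) :
    m = lam * n ^ 2 / ((k - s) * (n - 1) + 1) := by
  set D := k * (n - 1) + 1 with hD
  set d := (k - s) * (n - 1) + 1 with hd
  have ht : 1 ≤ n - 1 := by omega
  have hDpos : 0 < D := by omega
  have hcpos0 : 0 < (n - 1) * (lam * n ^ 2 + k * (n - 1) + 1) :=
    Nat.mul_pos ht (by positivity)
  have hcpos : (0:ℚ) < (((n - 1) * (lam * n ^ 2 + k * (n - 1) + 1) : ℕ) : ℚ) := by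
    exact_mod_cast hcpos0
  rw [lt_div_iff₀ hcpos] at hbound
  have hb : s * ((n - 1) * (lam * n ^ 2 + D)) < D ^ 2 := by
    have : s * ((n - 1) * (lam * n ^ 2 + k * (n - 1) + 1)) < D ^ 2 := by
      exact_mod_cast hbound
    calc s * ((n - 1) * (lam * n ^ 2 + D)) =
        s * ((n - 1) * (lam * n ^ 2 + k * (n - 1) + 1)) := by rw [hD]; ring
      _ < D ^ 2 := this
  have h1 : lam * n ^ 2 + D = (m + 1) * D := by rw [← heq]; ring
  rw [h1] at hb
  have hkey : s * (n - 1) * (m + 1) < D := by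
    have h2 : s * (n - 1) * (m + 1) * D < D * D := by
      calc s * (n - 1) * (m + 1) * D = s * ((n - 1) * ((m + 1) * D)) := by ring
        _ < D ^ 2 := hb
        _ = D * D := by ring
    exact Nat.lt_of_mul_lt_mul_right h2
  have hst : s * (n - 1) ≤ k * (n - 1) := Nat.mul_le_mul_right _ hsk.le
  have hdD : d + s * (n - 1) = D := by
    rw [hd, hD, Nat.sub_mul]; omega
  have hms : m * (s * (n - 1)) < d := by nlinarith [hkey, hdD]
  have hsplit : lam * n ^ 2 = m * d + m * (s * (n - 1)) := by
    rw [← heq, ← hdD]; ring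
  have hlow : m * d ≤ lam * n ^ 2 := by omega
  have hhigh : lam * n ^ 2 < (m + 1) * d := by
    calc lam * n ^ 2 = m * d + m * (s * (n - 1)) := hsplit
      _ < m * d + d := by omega
      _ = (m + 1) * d := by ring
  exact (Nat.div_eq_of_lt_le hlow hhigh).symm
end

section
/- If there exists an OA_λ(k,n) with a row repeated m = λn²/(k(n−1)+1) times (an optimal OA), and s is a positive integer with s < (k(n−1)+1)²/((n−1)(λn² + k(n−1)+1)), then there exists an OA_λ(k−s, n) with a row repeated exactly ⌊λn²/((k−s)(n−1)+1)⌋ times. -/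
set_option maxHeartbeats 1600000 in
theorem stmt17 (k n lam m s : ℕ) (hk : 2 ≤ k) (hn : 2 ≤ n) (hlam : 1 ≤ lam)
    (hm : 1 ≤ m) (hs : 1 ≤ s) (hsk : s < k)
    (heq : m * (k * (n - 1) + 1) = lam * n ^ 2)
    (hbound : (s : ℚ) < ((k * (n - 1) + 1 : ℕ) : ℚ) ^ 2
        / (((n - 1) * (lam * n ^ 2 + k * (n - 1) + 1) : ℕ) : ℚ))
    (A : Fin (lam * n ^ 2) → Fin k → Fin n) (hA : IsOA lam k n A)
    (r : Fin k → Fin n)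
    (hr : (Finset.univ.filter (fun i => A i = r)).card = m) :
    ∃ A' : Fin (lam * n ^ 2) → Fin (k - s) → Fin n,
      IsOA lam (k - s) n A' ∧
      ∃ r' : Fin (k - s) → Fin n,
        (Finset.univ.filter (fun i => A' i = r')).card
          = lam * n ^ 2 / ((k - s) * (n - 1) + 1) := by
  classical
  have hks : k - s ≤ k := Nat.sub_le _ _
  have hk'1 : 1 ≤ k - s := by omega
  set k' := k - s with hk'def
  set A' : Fin (lam * n ^ 2) → Fin k' → Fin n :=
    fun i c => A i (Fin.castLE hks c) with hA'def
  set r' : Fin k' → Fin n := fun c => r (Fin.castLE hks c) with hr'def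
  have hA' : IsOA lam k' n A' := by
    intro c₁ c₂ hne x y
    exact hA _ _ (fun h => hne (Fin.castLE_injective hks h)) x y
  refine ⟨A', hA', r', ?_⟩
  -- single-column counts in the original array
  haveI : Nontrivial (Fin k) := Fin.nontrivial_iff_two_le.mpr hk
  have hcol : ∀ (c : Fin k) (x : Fin n),
      (Finset.univ.filter (fun i => A i c = x)).card = lam * n := by
    intro c x
    obtain ⟨c₂, hc₂⟩ := exists_ne c
    rw [Finset.card_eq_sum_card_fiberwise
      (f := fun i => A i c₂) (t := Finset.univ) (fun i _ => Finset.mem_univ _)]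
    have : ∀ y : Fin n,
        ((Finset.univ.filter (fun i => A i c = x)).filter (fun i => A i c₂ = y)).card
          = lam := by
      intro y
      rw [Finset.filter_filter]
      exact hA c c₂ hc₂.symm x y
    simp only [this, Finset.sum_const, Finset.card_univ, Fintype.card_fin, smul_eq_mul]
    ring
  set C := Finset.univ.filter (fun i => A' i = r') with hCdef
  set t := C.card with htdef
  set a : Fin (lam * n ^ 2) → ℕ :=
    fun i => (Finset.univ.filter (fun c : Fin k' => A' i c = r' c)).card with hadef
  have haC : ∀ i ∈ C, a i = k' := by
    intro i hi
    rw [hCdef, Finset.mem_filter] at hi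
    have hfe : (Finset.univ.filter (fun c : Fin k' => A' i c = r' c)) = Finset.univ := by
      refine Finset.filter_true_of_mem (fun c _ => ?_)
      rw [hi.2]
    show (Finset.univ.filter (fun c : Fin k' => A' i c = r' c)).card = k'
    rw [hfe, Finset.card_univ, Fintype.card_fin]
  have hind : ∀ i, a i = ∑ c : Fin k', (if A' i c = r' c then 1 else 0) := by
    intro i; rw [hadef]; exact Finset.card_filter _ _
  -- first moment
  have S1 : ∑ i, (a i : ℤ) = (k' : ℤ) * (lam * n) := by
    have : ∑ i, a i = k' * (lam * n) := by
      simp only [hind]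
      rw [Finset.sum_comm]
      have : ∀ c : Fin k',
          ∑ i, (if A' i c = r' c then 1 else 0) = lam * n := by
        intro c
        rw [← Finset.card_filter]
        exact hcol (Fin.castLE hks c) (r (Fin.castLE hks c))
      simp only [this, Finset.sum_const, Finset.card_univ, Fintype.card_fin, smul_eq_mul]
    calc ∑ i, (a i : ℤ) = ((∑ i, a i : ℕ) : ℤ) := by push_cast; ring
      _ = (k' : ℤ) * (lam * n) := by rw [this]; push_cast; ring
  -- second moment
  have S2 : ∑ i, (a i : ℤ) ^ 2
      = (k' : ℤ) * (lam * n) + (k' : ℤ) * ((k' : ℤ) - 1) * lam := by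
    have key : ∀ i, (a i : ℤ) ^ 2 = ∑ c₁ : Fin k', ∑ c₂ : Fin k',
        (if A' i c₁ = r' c₁ ∧ A' i c₂ = r' c₂ then (1 : ℤ) else 0) := by
      intro i
      have : (a i : ℤ) = ∑ c : Fin k', (if A' i c = r' c then (1 : ℤ) else 0) := by
        rw [hind i]; push_cast; rfl
      rw [sq, this, Finset.sum_mul_sum]
      refine Finset.sum_congr rfl fun c₁ _ => Finset.sum_congr rfl fun c₂ _ => ?_
      split_ifs with h1 h2 h3 h4 <;> simp_all
    simp only [key]
    rw [Finset.sum_comm]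
    have houter : ∀ c₁ : Fin k', (∑ i, ∑ c₂ : Fin k',
        (if A' i c₁ = r' c₁ ∧ A' i c₂ = r' c₂ then (1 : ℤ) else 0))
          = (lam * n : ℤ) + ((k' : ℤ) - 1) * lam := by
      intro c₁
      rw [Finset.sum_comm]
      have hval : ∀ c₂ : Fin k',
          (∑ i, (if A' i c₁ = r' c₁ ∧ A' i c₂ = r' c₂ then (1 : ℤ) else 0))
            = if c₁ = c₂ then (lam * n : ℤ) else (lam : ℤ) := by
        intro c₂
        have hcard : (∑ i, (if A' i c₁ = r' c₁ ∧ A' i c₂ = r' c₂ then (1 : ℤ) else 0))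
            = ((Finset.univ.filter
                (fun i => A' i c₁ = r' c₁ ∧ A' i c₂ = r' c₂)).card : ℤ) := by
          rw [Finset.card_filter]; push_cast; rfl
        rw [hcard]
        by_cases h : c₁ = c₂
        · subst h
          simp only [if_pos rfl, and_self]
          rw [hcol (Fin.castLE hks c₁) (r (Fin.castLE hks c₁))]
          push_cast; ring
        · rw [if_neg h, hA' c₁ c₂ h (r' c₁) (r' c₂)]
      simp only [hval]
      have : ∀ c₂ : Fin k', (if c₁ = c₂ then (lam * n : ℤ) else (lam : ℤ))
          = (lam : ℤ) + (if c₁ = c₂ then (lam * n : ℤ) - lam else 0) := by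
        intro c₂; split_ifs <;> ring
      simp only [this]
      rw [Finset.sum_add_distrib, Finset.sum_ite_eq, if_pos (Finset.mem_univ c₁)]
      simp only [Finset.sum_const, Finset.card_univ, Fintype.card_fin, smul_eq_mul]
      ring
    simp only [houter, Finset.sum_const, Finset.card_univ, Fintype.card_fin, smul_eq_mul]
    ring
  -- split over copies and the rest
  have htN : t ≤ lam * n ^ 2 := by
    rw [htdef]
    calc C.card ≤ Finset.univ.card := Finset.card_le_card (Finset.subset_univ _)
      _ = lam * n ^ 2 := by rw [Finset.card_univ, Fintype.card_fin]
  have hsumC1 : ∑ i ∈ C, (a i : ℤ) = (t : ℤ) * k' := by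
    rw [Finset.sum_congr rfl (fun i hi => by rw [haC i hi]),
      Finset.sum_const, ← htdef]
    push_cast; ring
  have hsumC2 : ∑ i ∈ C, (a i : ℤ) ^ 2 = (t : ℤ) * (k' : ℤ) ^ 2 := by
    rw [Finset.sum_congr rfl (fun i hi => by rw [haC i hi]),
      Finset.sum_const, ← htdef]
    push_cast; ring
  have hcompl1 : ∑ i ∈ Cᶜ, (a i : ℤ) = (k' : ℤ) * (lam * n) - (t : ℤ) * k' := by
    have := Finset.sum_add_sum_compl C (fun i => (a i : ℤ))
    rw [hsumC1, S1] at this; linarith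
  have hcompl2 : ∑ i ∈ Cᶜ, (a i : ℤ) ^ 2
      = (k' : ℤ) * (lam * n) + (k' : ℤ) * ((k' : ℤ) - 1) * lam
        - (t : ℤ) * (k' : ℤ) ^ 2 := by
    have := Finset.sum_add_sum_compl C (fun i => (a i : ℤ) ^ 2)
    rw [hsumC2, S2] at this; linarith
  have hCS : (∑ i ∈ Cᶜ, (a i : ℤ)) ^ 2 ≤ (Cᶜ.card : ℤ) * ∑ i ∈ Cᶜ, (a i : ℤ) ^ 2 :=
    sq_sum_le_card_mul_sum_sq (s := Cᶜ) (f := fun i => (a i : ℤ))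
  have hcardcompl : (Cᶜ.card : ℤ) = (lam * n ^ 2 : ℤ) - t := by
    rw [Finset.card_compl, Fintype.card_fin, ← htdef]
    push_cast [htN]; ring
  rw [hcardcompl, hcompl1, hcompl2] at hCS
  -- the Bose–Bush upper bound
  have hkey : (t : ℤ) * ((k' : ℤ) * ((n : ℤ) - 1) + 1) ≤ (lam : ℤ) * n ^ 2 := by
    have hc : (0 : ℤ) < (k' : ℤ) * lam * ((n : ℤ) - 1) := by
      have h1 : (0 : ℤ) < (k' : ℤ) := by exact_mod_cast hk'1
      have h2 : (0 : ℤ) < (lam : ℤ) := by exact_mod_cast hlam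
      have h3 : (0 : ℤ) < (n : ℤ) - 1 := by
        have h4 : (2 : ℤ) ≤ (n : ℤ) := by exact_mod_cast hn
        linarith
      exact mul_pos (mul_pos h1 h2) h3
    have hnn : (0 : ℤ) ≤ (k' : ℤ) * lam * ((n : ℤ) - 1) *
        ((lam : ℤ) * n ^ 2 - (t : ℤ) * ((k' : ℤ) * ((n : ℤ) - 1) + 1)) := by
      have hexp : (k' : ℤ) * lam * ((n : ℤ) - 1) *
          ((lam : ℤ) * n ^ 2 - (t : ℤ) * ((k' : ℤ) * ((n : ℤ) - 1) + 1))
          = ((lam : ℤ) * n ^ 2 - t) *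
              ((k' : ℤ) * (lam * n) + (k' : ℤ) * ((k' : ℤ) - 1) * lam
                - (t : ℤ) * (k' : ℤ) ^ 2)
            - ((k' : ℤ) * (lam * n) - (t : ℤ) * k') ^ 2 := by ring
      rw [hexp]
      push_cast at hCS ⊢
      linarith
    nlinarith [hnn, hc, mul_pos hc (show (0:ℤ) < 1 by norm_num)]
  -- rewrite the ℤ bound in ℕ
  have hn1 : ((n - 1 : ℕ) : ℤ) = (n : ℤ) - 1 := by
    have : 1 ≤ n := by omega
    push_cast [this]; ring
  have htm : t * (k' * (n - 1) + 1) ≤ lam * n ^ 2 := by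
    have h2 : (t : ℤ) * ((k' : ℤ) * (((n - 1 : ℕ)) : ℤ) + 1) ≤ (lam : ℤ) * (n : ℤ) ^ 2 := by
      rw [hn1]; exact hkey
    exact_mod_cast h2
  -- lower bound : m ≤ t
  have hmt : m ≤ t := by
    rw [← hr, htdef, hCdef]
    refine Finset.card_le_card ?_
    intro i hi
    rw [Finset.mem_filter] at hi ⊢
    refine ⟨Finset.mem_univ _, ?_⟩
    funext c
    show A i (Fin.castLE hks c) = r (Fin.castLE hks c)
    rw [hi.2]
  -- the bound on s gives s * (n-1) * (m+1) < k*(n-1)+1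
  have hKpos : 0 < k * (n - 1) + 1 := by omega
  have hden : 0 < (n - 1) * (lam * n ^ 2 + k * (n - 1) + 1) := by
    have : 0 < lam * n ^ 2 := by positivity
    have : 1 ≤ n - 1 := by omega
    nlinarith
  have hs2 : s * ((n - 1) * (lam * n ^ 2 + k * (n - 1) + 1)) < (k * (n - 1) + 1) ^ 2 := by
    have hdq : (0 : ℚ) < (((n - 1) * (lam * n ^ 2 + k * (n - 1) + 1) : ℕ) : ℚ) := by
      exact_mod_cast hden
    have h2 := (lt_div_iff₀ hdq).mp hbound
    have h3 : ((s * ((n - 1) * (lam * n ^ 2 + k * (n - 1) + 1)) : ℕ) : ℚ)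
        < (((k * (n - 1) + 1) ^ 2 : ℕ) : ℚ) := by
      push_cast
      push_cast at h2
      linarith
    exact_mod_cast h3
  have hs3 : s * (n - 1) * (m + 1) < k * (n - 1) + 1 := by
    have hsub : lam * n ^ 2 + k * (n - 1) + 1 = (m + 1) * (k * (n - 1) + 1) := by
      rw [← heq]; ring
    rw [hsub] at hs2
    have : s * ((n - 1) * ((m + 1) * (k * (n - 1) + 1)))
        = (s * (n - 1) * (m + 1)) * (k * (n - 1) + 1) := by ring
    rw [this, sq] at hs2
    exact Nat.lt_of_mul_lt_mul_right hs2
  -- strict upper bound : lam*n^2 < (m+1)*(k'*(n-1)+1)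
  have hsk' : s * (n - 1) ≤ k * (n - 1) := Nat.mul_le_mul_right _ (le_of_lt hsk)
  have hk'n : k' * (n - 1) = k * (n - 1) - s * (n - 1) := by
    rw [hk'def, Nat.sub_mul]
  have hup : lam * n ^ 2 < (m + 1) * (k' * (n - 1) + 1) := by
    have hZ : ((lam * n ^ 2 : ℕ) : ℤ) < ((m + 1 : ℕ) : ℤ) * ((k' * (n - 1) + 1 : ℕ) : ℤ) := by
      have e1 : ((k' * (n - 1) + 1 : ℕ) : ℤ)
          = ((k * (n - 1) : ℕ) : ℤ) - ((s * (n - 1) : ℕ) : ℤ) + 1 := by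
        rw [hk'n]; push_cast [hsk']; ring
      have e2 : (m : ℤ) * (((k * (n - 1) : ℕ) : ℤ) + 1) = ((lam * n ^ 2 : ℕ) : ℤ) := by
        exact_mod_cast heq
      have e3 : ((s * (n - 1) : ℕ) : ℤ) * ((m : ℤ) + 1) < ((k * (n - 1) : ℕ) : ℤ) + 1 := by
        exact_mod_cast hs3
      rw [e1]
      push_cast
      push_cast at e2 e3
      nlinarith
    exact_mod_cast hZ
  -- conclude t = m
  have htm2 : t ≤ m := by
    by_contra h
    push_neg at h
    have : (m + 1) * (k' * (n - 1) + 1) ≤ t * (k' * (n - 1) + 1) :=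
      Nat.mul_le_mul_right _ h
    omega
  have hteq : t = m := le_antisymm htm2 hmt
  -- compute the division
  have hdiveq : lam * n ^ 2 / (k' * (n - 1) + 1) = m := by
    apply Nat.div_eq_of_lt_le
    · calc m * (k' * (n - 1) + 1) ≤ m * (k * (n - 1) + 1) :=
            Nat.mul_le_mul_left _ (Nat.add_le_add_right
              (Nat.mul_le_mul_right _ hks) 1)
          _ = lam * n ^ 2 := heq
    · exact hup
  rw [hdiveq, ← hteq, htdef]
end
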